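/- arXiv:1011.3498 — 5 statements merged into one kernel-verified Lean document; each statement's English description precedes it below -/
import Mathlib

section
/- Let α_{q,g} = -∑_{k=0}^{g-1} ln(1 - q^{k-g}). Then for every integer s ≥ g, the probability that s uniformly random vectors in GF(q)^g do not span GF(q)^g is at most 1 - exp(-α_{q,g} · q^{-(s-g)}), and hence at most α_{q,g} · q^{-(s-g)}. -/
open MeasureTheory Finset Real

section Aux

open Module Matrix

lemma stmt3_span_top_iff_swap {F : Type*} [Field F] {g s : ℕ}
    (v : Fin s → (Fin g → F)) :
    Submodule.span F (Set.range v) = ⊤ ↔ LinearIndependent F (Function.swap v) := by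
  set M : Matrix (Fin g) (Fin s) F := Matrix.of (Function.swap v) with hM
  have hMT : Mᵀ = Matrix.of v := rfl
  have h1 : Submodule.span F (Set.range v) = LinearMap.range M.mulVecLin := by
    rw [Matrix.range_mulVecLin]; rfl
  have hrank : M.rank = finrank F (LinearMap.range M.mulVecLin) := rfl
  rw [h1]
  constructor
  · intro h
    have hr : M.rank = g := by
      rw [hrank, h, finrank_top, Module.finrank_fin_fun]
    rw [M.rank_eq_finrank_span_row] at hr
    rw [linearIndependent_iff_card_eq_finrank_span]
    have hr' : g = finrank F (Submodule.span F (Set.range (Function.swap v))) := hr.symm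
    simpa [Set.finrank] using hr'
  · intro h
    have hr : M.rank = g := by
      have := h.rank_matrix (M := M)
      simpa using this
    apply Submodule.eq_top_of_finrank_eq
    rw [Module.finrank_fin_fun]
    rw [hrank] at hr
    exact hr

lemma stmt3_card_span_top {F : Type*} [Field F] [Fintype F] {g s : ℕ} (hs : g ≤ s) :
    Nat.card {v : Fin s → (Fin g → F) // Submodule.span F (Set.range v) = ⊤} =
      ∏ i : Fin g, (Fintype.card F ^ s - Fintype.card F ^ (i : ℕ)) := by
  have e : {v : Fin s → (Fin g → F) // Submodule.span F (Set.range v) = ⊤} ≃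
      {w : Fin g → (Fin s → F) // LinearIndependent F w} :=
    (Equiv.piComm fun _ _ => F).subtypeEquiv fun v => stmt3_span_top_iff_swap v
  rw [Nat.card_congr e]
  have hn : finrank F (Fin s → F) = s := Module.finrank_fin_fun F
  have := card_linearIndependent (K := F) (V := Fin s → F) (k := g) (by rw [hn]; exact hs)
  rw [this, hn]

/-- The key real inequality. -/
lemma stmt3_real_key {q g s : ℕ} (hq2 : 2 ≤ q) (hs : g ≤ s)
    (α : ℝ) (hα : α = -∑ k ∈ Finset.range g, Real.log (1 - (q : ℝ) ^ ((k : ℤ) - (g : ℤ)))) :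
    Real.exp (-(α * (q : ℝ) ^ (-((s : ℤ) - (g : ℤ))))) ≤
      ∏ k ∈ Finset.range g, (1 - (q : ℝ) ^ ((k : ℤ) - (s : ℤ))) := by
  have hq1 : (1 : ℝ) < q := by exact_mod_cast Nat.lt_of_lt_of_le one_lt_two hq2
  have hq0 : (0 : ℝ) < q := lt_trans zero_lt_one hq1
  set t : ℝ := (q : ℝ) ^ (-((s : ℤ) - (g : ℤ))) with htdef
  have ht0 : 0 < t := zpow_pos hq0 _
  have ht1 : t ≤ 1 := by
    apply zpow_le_one_of_nonpos₀ hq1.le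
    omega
  -- termwise bound
  have key : ∀ k ∈ Finset.range g,
      t * Real.log (1 - (q : ℝ) ^ ((k : ℤ) - (g : ℤ))) ≤
        Real.log (1 - (q : ℝ) ^ ((k : ℤ) - (s : ℤ))) := by
    intro k hk
    rw [Finset.mem_range] at hk
    set y : ℝ := (q : ℝ) ^ ((k : ℤ) - (g : ℤ)) with hy
    have hy0 : 0 < y := zpow_pos hq0 _
    have hy1 : y < 1 := by
      rw [hy]
      apply zpow_lt_one_of_neg₀ hq1
      omega
    have hty : t * y = (q : ℝ) ^ ((k : ℤ) - (s : ℤ)) := by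
      rw [htdef, hy, ← zpow_add₀ (ne_of_gt hq0)]
      ring_nf
    have hcc := (strictConcaveOn_log_Ioi.concaveOn).2
      (show (1 : ℝ) - y ∈ Set.Ioi (0:ℝ) by simpa using sub_pos.2 hy1)
      (show (1 : ℝ) ∈ Set.Ioi (0:ℝ) by simp)
      (show (0:ℝ) ≤ t from ht0.le) (show (0:ℝ) ≤ 1 - t by linarith)
      (show t + (1 - t) = 1 by ring)
    have heq : t • (1 - y) + (1 - t) • (1 : ℝ) = 1 - t * y := by
      simp only [smul_eq_mul]; ring
    rw [heq] at hcc
    calc t * Real.log (1 - y) = t • Real.log (1 - y) + (1 - t) • Real.log 1 := by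
          simp [smul_eq_mul]
      _ ≤ Real.log (1 - t * y) := hcc
      _ = Real.log (1 - (q : ℝ) ^ ((k : ℤ) - (s : ℤ))) := by rw [hty]
  have hpos : ∀ k ∈ Finset.range g, (0 : ℝ) < 1 - (q : ℝ) ^ ((k : ℤ) - (s : ℤ)) := by
    intro k hk
    rw [Finset.mem_range] at hk
    have : (q : ℝ) ^ ((k : ℤ) - (s : ℤ)) < 1 := by
      apply zpow_lt_one_of_neg₀ hq1
      omega
    linarith
  calc Real.exp (-(α * t)) = Real.exp (∑ k ∈ Finset.range g,
        t * Real.log (1 - (q : ℝ) ^ ((k : ℤ) - (g : ℤ)))) := by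
        rw [hα]; congr 1
        rw [neg_mul, neg_neg, Finset.sum_mul]
        exact Finset.sum_congr rfl fun k _ => mul_comm _ _
    _ ≤ Real.exp (∑ k ∈ Finset.range g, Real.log (1 - (q : ℝ) ^ ((k : ℤ) - (s : ℤ)))) := by
        apply Real.exp_le_exp.2
        exact Finset.sum_le_sum key
    _ = ∏ k ∈ Finset.range g, (1 - (q : ℝ) ^ ((k : ℤ) - (s : ℤ))) := by
        rw [Real.exp_sum]
        exact Finset.prod_congr rfl fun k hk => Real.exp_log (hpos k hk)

end Aux

/-- With `α_{q,g} = -∑_{k=0}^{g-1} ln(1 - q^{k-g})`, for every `s ≥ g`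
the probability that `s` uniformly random vectors in `GF(q)^g` do not span `GF(q)^g`
is at most `1 - exp(-α_{q,g} q^{-(s-g)})`, hence at most `α_{q,g} q^{-(s-g)}`. -/
theorem stmt3
    (q g s : ℕ) (hq2 : 2 ≤ q) (hg : 1 ≤ g) (hs : g ≤ s)
    (F : Type*) [Field F] [Fintype F] [DecidableEq F] (hq : Fintype.card F = q)
    (α : ℝ) (hα : α = -∑ k ∈ Finset.range g, Real.log (1 - (q : ℝ) ^ ((k : ℤ) - (g : ℤ)))) :
    @PMF.toMeasure (Fin s → (Fin g → F)) ⊤ (PMF.uniformOfFintype (Fin s → (Fin g → F)))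
        {v : Fin s → (Fin g → F) | Submodule.span F (Set.range v) ≠ ⊤}
      ≤ ENNReal.ofReal (1 - Real.exp (-(α * (q : ℝ) ^ (-((s : ℤ) - (g : ℤ)))))) ∧
    @PMF.toMeasure (Fin s → (Fin g → F)) ⊤ (PMF.uniformOfFintype (Fin s → (Fin g → F)))
        {v : Fin s → (Fin g → F) | Submodule.span F (Set.range v) ≠ ⊤}
      ≤ ENNReal.ofReal (α * (q : ℝ) ^ (-((s : ℤ) - (g : ℤ)))) := by
  classical
  set t : ℝ := (q : ℝ) ^ (-((s : ℤ) - (g : ℤ))) with htdef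
  set S : Set (Fin s → (Fin g → F)) :=
    {v : Fin s → (Fin g → F) | Submodule.span F (Set.range v) ≠ ⊤} with hS
  have hq0 : (0 : ℝ) < q := by positivity
  have hqne : (q : ℝ) ≠ 0 := ne_of_gt hq0
  -- cardinalities
  have cardT : Fintype.card (Fin s → (Fin g → F)) = (q ^ g) ^ s := by
    simp [Fintype.card_fun, hq, Fintype.card_fin]
  have cardSpan : Fintype.card {v : Fin s → (Fin g → F) // Submodule.span F (Set.range v) = ⊤}
      = ∏ i : Fin g, (q ^ s - q ^ (i : ℕ)) := by
    rw [← Nat.card_eq_fintype_card, stmt3_card_span_top hs, hq]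
  have cardS : Fintype.card S = (q ^ g) ^ s - ∏ i : Fin g, (q ^ s - q ^ (i : ℕ)) := by
    have h0 : Fintype.card S =
        Fintype.card {v : Fin s → (Fin g → F) // ¬ Submodule.span F (Set.range v) = ⊤} := by
      apply Fintype.card_congr
      exact Equiv.refl _
    rw [h0, Fintype.card_subtype_compl, cardT, cardSpan]
  -- measure value
  letI : MeasurableSpace (Fin s → (Fin g → F)) := ⊤
  have hmeas : MeasurableSet[⊤] S := trivial
  have hμ : @PMF.toMeasure (Fin s → (Fin g → F)) ⊤ (PMF.uniformOfFintype (Fin s → (Fin g → F))) S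
      = ENNReal.ofReal ((Fintype.card S : ℝ) / (Fintype.card (Fin s → (Fin g → F)) : ℝ)) := by
    rw [PMF.toMeasure_uniformOfFintype_apply S hmeas]
    rw [ENNReal.ofReal_div_of_pos (by positivity), ENNReal.ofReal_natCast, ENNReal.ofReal_natCast]
  -- real-number evaluation of the probability
  have hNle : ∏ i : Fin g, (q ^ s - q ^ (i : ℕ)) ≤ (q ^ g) ^ s := by
    calc ∏ i : Fin g, (q ^ s - q ^ (i : ℕ)) ≤ ∏ _i : Fin g, q ^ s :=
          Finset.prod_le_prod (fun _ _ => Nat.zero_le _) (fun _ _ => Nat.sub_le _ _)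
      _ = (q ^ g) ^ s := by
          rw [Finset.prod_const, Finset.card_univ, Fintype.card_fin, ← pow_mul, ← pow_mul,
            Nat.mul_comm]
  have hNcast : ((∏ i : Fin g, (q ^ s - q ^ (i : ℕ)) : ℕ) : ℝ)
      = ∏ i : Fin g, ((q : ℝ) ^ s - (q : ℝ) ^ (i : ℕ)) := by
    rw [Nat.cast_prod]
    refine Finset.prod_congr rfl fun i _ => ?_
    rw [Nat.cast_sub (Nat.pow_le_pow_right (by omega) (le_of_lt (lt_of_lt_of_le i.isLt hs)))]
    push_cast
    ring
  have hden : ((q : ℝ) ^ g) ^ s = ∏ _i : Fin g, (q : ℝ) ^ s := by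
    rw [Finset.prod_const, Finset.card_univ, Fintype.card_fin, ← pow_mul, ← pow_mul, mul_comm]
  have hratio : ((Fintype.card S : ℝ) / (Fintype.card (Fin s → (Fin g → F)) : ℝ))
      = 1 - ∏ k ∈ Finset.range g, (1 - (q : ℝ) ^ ((k : ℤ) - (s : ℤ))) := by
    rw [cardS, cardT, Nat.cast_sub hNle]
    push_cast [hNcast]
    rw [sub_div, div_self (by positivity)]
    congr 1
    rw [hden, ← Finset.prod_div_distrib, Finset.prod_range (n := g)
      (f := fun k => 1 - (q : ℝ) ^ ((k : ℤ) - (s : ℤ)))]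
    refine Finset.prod_congr rfl fun i _ => ?_
    rw [sub_div, div_self (by positivity)]
    congr 1
    rw [zpow_sub₀ hqne, zpow_natCast, zpow_natCast]
  -- the inequalities
  have hprod := stmt3_real_key hq2 hs α hα
  have h1 : ((Fintype.card S : ℝ) / (Fintype.card (Fin s → (Fin g → F)) : ℝ))
      ≤ 1 - Real.exp (-(α * t)) := by
    rw [hratio]
    linarith [hprod]
  have h2 : 1 - Real.exp (-(α * t)) ≤ α * t := by
    have := Real.add_one_le_exp (-(α * t))
    linarith
  constructor
  · rw [hμ]
    exact ENNReal.ofReal_le_ofReal h1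
  · rw [hμ]
    exact ENNReal.ofReal_le_ofReal (le_trans h1 h2)
end

section
/- Let T be the number of i.i.d. samples from a distribution on {1,…,n} with probabilities ρ_1,…,ρ_n until, for every i, at least m_i copies of item i have been drawn. Then the tail-probability generating function φ_T(z) = ∑_{i≥0} Prob[T > i] z^i satisfies φ_T(z) = ∫_0^∞ { e^{-x(1-z)} - ∏_{i=1}^n [ e^{-ρ_i x(1-z)} - S_{m_i}(ρ_i x z) e^{-ρ_i x} ] } dx for 0 ≤ z ≤ 1, where S_m(x) = ∑_{j=0}^{m-1} x^j/j! (with S_0 = 0). -/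
open MeasureTheory ProbabilityTheory Finset Real

/-- Truncated exponential series `S_m(x) = ∑_{j=0}^{m-1} x^j/j!` (so `S_0 = 0`). -/
noncomputable def truncExp (m : ℕ) (x : ℝ) : ℝ := ∑ j ∈ Finset.range m, x ^ j / (j.factorial : ℝ)

open scoped ENNReal

set_option maxHeartbeats 1000000

section AuxLemmas

lemma ofReal_prod_nn {α : Type*} (s : Finset α) (f : α → ℝ) (hf : ∀ i ∈ s, 0 ≤ f i) :
    ENNReal.ofReal (∏ i ∈ s, f i) = ∏ i ∈ s, ENNReal.ofReal (f i) := by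
  classical
  induction s using Finset.induction with
  | empty => simp
  | insert _ _ hx ih =>
    rename_i a s
    rw [Finset.prod_insert hx, Finset.prod_insert hx,
      ENNReal.ofReal_mul (hf a (Finset.mem_insert_self a s)),
      ih (fun i hi => hf i (Finset.mem_insert_of_mem hi))]

lemma part_meas
    {Ω : Type*} [MeasurableSpace Ω] (μ : Measure Ω) [IsProbabilityMeasure μ]
    {n : ℕ} (ρ : Fin n → ℝ) (hρ0 : ∀ i, 0 ≤ ρ i) (hρsum : ∑ i, ρ i = 1)
    (X : ℕ → Ω → Fin n)
    (hindep : iIndepFun (m := fun _ => (⊤ : MeasurableSpace (Fin n))) X μ)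
    (hdist : ∀ t i, μ {ω | X t ω = i} = ENNReal.ofReal (ρ i))
    (t : ℕ) (P : (Fin t → Fin n) → Prop) [DecidablePred P] :
    μ {ω | P (fun u : Fin t => X u.val ω)} =
      ENNReal.ofReal (∑ f ∈ Finset.univ.filter P, ∏ u, ρ (f u)) := by
  classical
  -- measure of elementary cylinder
  have hA : ∀ f : Fin t → Fin n,
      μ {ω | ∀ u : Fin t, X u.val ω = f u} = ENNReal.ofReal (∏ u, ρ (f u)) := by
    intro f
    set sets : ℕ → Set (Fin n) := fun u => if h : u < t then {f ⟨u, h⟩} else Set.univ with hsets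
    have hmeas : ∀ i, i ∈ Finset.range t → MeasurableSet[(⊤ : MeasurableSpace (Fin n))] (sets i) :=
      fun i _ => trivial
    have hmul := (iIndepFun_iff_measure_inter_preimage_eq_mul.mp hindep) (Finset.range t) hmeas
    have hset : {ω | ∀ u : Fin t, X u.val ω = f u} = ⋂ u ∈ Finset.range t, X u ⁻¹' sets u := by
      ext ω
      simp only [Set.mem_setOf_eq, Set.mem_iInter, Set.mem_preimage, Finset.mem_range]
      constructor
      · intro h u hu
        simp only [hsets, dif_pos hu]
        exact h ⟨u, hu⟩
      · intro h u
        have := h u.val u.isLt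
        simpa only [hsets, dif_pos u.isLt, Set.mem_singleton_iff, Fin.eta] using this
    rw [hset, hmul]
    have hterm : ∀ u ∈ Finset.range t,
        μ (X u ⁻¹' sets u) = ENNReal.ofReal (if h : u < t then ρ (f ⟨u, h⟩) else 1) := by
      intro u hu
      have hu' : u < t := Finset.mem_range.mp hu
      simp only [hsets, dif_pos hu']
      rw [← hdist u (f ⟨u, hu'⟩)]
      rfl
    rw [Finset.prod_congr rfl hterm]
    rw [← ofReal_prod_nn]
    · congr 1
      rw [← Fin.prod_univ_eq_prod_range (fun u => if h : u < t then ρ (f ⟨u, h⟩) else 1) t]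
      apply Finset.prod_congr rfl
      intro u _
      simp [u.isLt]
    · intro u _
      split
      · exact hρ0 _
      · exact zero_le_one
  -- covering bound
  have hcover : ∀ (Q : (Fin t → Fin n) → Prop) (inst : DecidablePred Q),
      μ {ω | Q (fun u : Fin t => X u.val ω)} ≤
        ENNReal.ofReal (∑ f ∈ Finset.univ.filter Q, ∏ u, ρ (f u)) := by
    intro Q instQ
    have hsub : {ω | Q (fun u : Fin t => X u.val ω)} ⊆
        ⋃ f ∈ Finset.univ.filter Q, {ω | ∀ u : Fin t, X u.val ω = f u} := by
      intro ω hω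
      refine Set.mem_biUnion (Finset.mem_filter.mpr ⟨Finset.mem_univ _, hω⟩) ?_
      exact fun u => rfl
    calc μ {ω | Q (fun u : Fin t => X u.val ω)}
        ≤ μ (⋃ f ∈ Finset.univ.filter Q, {ω | ∀ u : Fin t, X u.val ω = f u}) := measure_mono hsub
      _ ≤ ∑ f ∈ Finset.univ.filter Q, μ {ω | ∀ u : Fin t, X u.val ω = f u} :=
          measure_biUnion_finset_le _ _
      _ = ENNReal.ofReal (∑ f ∈ Finset.univ.filter Q, ∏ u, ρ (f u)) := by
          rw [ENNReal.ofReal_sum_of_nonneg (fun f _ => Finset.prod_nonneg (fun u _ => hρ0 _))]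
          exact Finset.sum_congr rfl (fun f _ => hA f)
  -- total mass one
  have htot : ∑ f : Fin t → Fin n, ∏ u, ρ (f u) = 1 := by
    rw [← Fintype.piFinset_univ, ← Finset.prod_univ_sum (fun _ => Finset.univ) (fun _ j => ρ j)]
    simp [hρsum]
  have hsplit : (∑ f ∈ Finset.univ.filter P, ∏ u, ρ (f u)) +
      (∑ f ∈ Finset.univ.filter (fun f => ¬ P f), ∏ u, ρ (f u)) = 1 := by
    rw [Finset.sum_filter_add_sum_filter_not]; exact htot
  have hnn : ∀ (Q : (Fin t → Fin n) → Prop) (inst : DecidablePred Q),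
      (0:ℝ) ≤ ∑ f ∈ Finset.univ.filter Q, ∏ u, ρ (f u) :=
    fun Q _ => Finset.sum_nonneg (fun f _ => Finset.prod_nonneg (fun u _ => hρ0 _))
  set a := μ {ω | P (fun u : Fin t => X u.val ω)}
  set c := μ {ω | ¬ P (fun u : Fin t => X u.val ω)}
  set b := ENNReal.ofReal (∑ f ∈ Finset.univ.filter P, ∏ u, ρ (f u))
  set d := ENNReal.ofReal (∑ f ∈ Finset.univ.filter (fun f => ¬ P f), ∏ u, ρ (f u))
  have hab : a ≤ b := hcover P _
  have hcd : c ≤ d := hcover (fun f => ¬ P f) _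
  have hbd : b + d = 1 := by
    rw [← ENNReal.ofReal_add (hnn P _) (hnn _ _), hsplit, ENNReal.ofReal_one]
  have hac : (1 : ℝ≥0∞) ≤ a + c := by
    have : (Set.univ : Set Ω) ⊆ {ω | P (fun u : Fin t => X u.val ω)} ∪
        {ω | ¬ P (fun u : Fin t => X u.val ω)} := by
      intro ω _; by_cases h : P (fun u : Fin t => X u.val ω)
      · exact Or.inl h
      · exact Or.inr h
    calc (1:ℝ≥0∞) = μ Set.univ := (measure_univ).symm
      _ ≤ μ ({ω | P (fun u : Fin t => X u.val ω)} ∪ {ω | ¬ P (fun u : Fin t => X u.val ω)}) :=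
          measure_mono this
      _ ≤ a + c := measure_union_le _ _
  refine le_antisymm hab ?_
  have : b + d ≤ a + d := by
    calc b + d = 1 := hbd
      _ ≤ a + c := hac
      _ ≤ a + d := add_le_add_right hcd a
  exact (ENNReal.add_le_add_iff_right ENNReal.ofReal_ne_top).mp this

lemma keyG {n : ℕ} (ρ : Fin n → ℝ) :
    ∀ (t : ℕ) (F : (Fin n → ℕ) → ℝ),
      ∑ f : Fin t → Fin n,
          F (fun i => ∑ u, if f u = i then 1 else 0) * ∏ u, ρ (f u)
        = (t.factorial : ℝ) * ∑ k ∈ Finset.Nat.antidiagonalTuple n t,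
            F k * ∏ i, ρ i ^ k i / ((k i).factorial : ℝ) := by
  classical
  intro t
  induction t with
  | zero =>
    intro F
    rw [Finset.Nat.antidiagonalTuple_zero_right]
    simp
    rfl
  | succ t ih =>
    intro F
    -- reindex LHS by (j, f) ↦ Fin.cons j f
    have e := Fin.consEquiv (fun _ : Fin (t + 1) => Fin n)
    rw [← Equiv.sum_comp (Fin.consEquiv (fun _ : Fin (t + 1) => Fin n))
      (fun g : Fin (t+1) → Fin n =>
        F (fun i => ∑ u, if g u = i then 1 else 0) * ∏ u, ρ (g u))]
    rw [Fintype.sum_prod_type]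
    have hcnt : ∀ (j : Fin n) (f : Fin t → Fin n) (i : Fin n),
        (∑ u : Fin (t+1), if (Fin.cons j f : Fin (t+1) → Fin n) u = i then 1 else 0)
          = (if j = i then 1 else 0) + ∑ u : Fin t, if f u = i then 1 else 0 := by
      intro j f i
      rw [Fin.sum_univ_succ]
      simp
    have hprod : ∀ (j : Fin n) (f : Fin t → Fin n),
        (∏ u : Fin (t+1), ρ ((Fin.cons j f : Fin (t+1) → Fin n) u)) = ρ j * ∏ u : Fin t, ρ (f u) := by
      intro j f
      rw [Fin.prod_univ_succ]
      simp
    have hL : ∀ j : Fin n,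
        (∑ f : Fin t → Fin n,
          F (fun i => ∑ u, if (Fin.consEquiv (fun _ : Fin (t + 1) => Fin n)) (j, f) u = i
              then 1 else 0)
            * ∏ u, ρ ((Fin.consEquiv (fun _ : Fin (t + 1) => Fin n)) (j, f) u))
          = ρ j * ((t.factorial : ℝ) * ∑ k ∈ Finset.Nat.antidiagonalTuple n t,
              F (fun i => (if j = i then 1 else 0) + k i)
                * ∏ i, ρ i ^ k i / ((k i).factorial : ℝ)) := by
      intro j
      rw [← ih (fun k => F (fun i => (if j = i then 1 else 0) + k i)), Finset.mul_sum]
      apply Finset.sum_congr rfl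
      intro f _
      simp only [Fin.consEquiv_apply]
      rw [hprod j f]
      have : (fun i => ∑ u : Fin (t+1), if (Fin.cons j f : Fin (t+1) → Fin n) u = i then 1 else 0)
          = fun i => (if j = i then 1 else 0) + ∑ u : Fin t, if f u = i then 1 else 0 :=
        funext (hcnt j f)
      rw [this]
      ring
    rw [Finset.sum_congr rfl (fun j _ => hL j)]
    -- now pure algebra on compositions
    set S1 := fun (j : Fin n) => ∑ k ∈ Finset.Nat.antidiagonalTuple n t,
        F (fun i => (if j = i then 1 else 0) + k i) * ∏ i, ρ i ^ k i / ((k i).factorial : ℝ)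
    have key : ∀ j : Fin n,
        (∑ k' ∈ Finset.Nat.antidiagonalTuple n (t+1),
          (k' j : ℝ) * (F k' * ∏ i, ρ i ^ k' i / ((k' i).factorial : ℝ)))
          = ρ j * S1 j := by
      intro j
      rw [← Finset.sum_filter_of_ne (p := fun k' => k' j ≠ 0)
        (f := fun k' => (k' j : ℝ) * (F k' * ∏ i, ρ i ^ k' i / ((k' i).factorial : ℝ)))
        (by intro k' _ hne; exact fun h0 => hne (by simp [h0]))]
      simp only [S1]
      rw [Finset.mul_sum]
      apply Finset.sum_nbij' (i := fun k' => fun i => k' i - (if j = i then 1 else 0))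
        (j := fun k => fun i => (if j = i then 1 else 0) + k i)
      · intro k' hk'
        simp only [Finset.mem_filter, Finset.Nat.mem_antidiagonalTuple] at hk'
        rw [Finset.Nat.mem_antidiagonalTuple]
        have h1 : ∀ i, k' i = (k' i - (if j = i then 1 else 0)) + (if j = i then 1 else 0) := by
          intro i
          have : j = i → 1 ≤ k' i := by
            intro h; subst h; omega
          split <;> omega
        have h2 : ∑ i, k' i = (∑ i, (k' i - (if j = i then 1 else 0)))
            + ∑ i : Fin n, (if j = i then 1 else 0) := by
          rw [← Finset.sum_add_distrib]
          exact Finset.sum_congr rfl (fun i _ => h1 i)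
        have h3 : (∑ i : Fin n, if j = i then 1 else 0) = 1 := by
          simp
        omega
      · intro k hk
        rw [Finset.Nat.mem_antidiagonalTuple] at hk
        simp only [Finset.mem_filter, Finset.Nat.mem_antidiagonalTuple]
        have h3 : (∑ i : Fin n, if j = i then (1:ℕ) else 0) = 1 := by simp
        refine ⟨?_, ?_⟩
        · rw [Finset.sum_add_distrib, h3, hk]; omega
        · simp
      · intro k' hk'
        simp only [Finset.mem_filter, Finset.Nat.mem_antidiagonalTuple] at hk'
        funext i
        beta_reduce
        have : j = i → 1 ≤ k' i := by intro h; subst h; omega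
        split <;> omega
      · intro k _
        funext i
        beta_reduce
        split <;> omega
      · intro k' hk'
        simp only [Finset.mem_filter, Finset.Nat.mem_antidiagonalTuple] at hk'
        have hup : (fun i => (if j = i then 1 else 0) + (k' i - (if j = i then 1 else 0))) = k' := by
          funext i
          have : j = i → 1 ≤ k' i := by intro h; subst h; omega
          split <;> omega
        rw [hup]
        -- term identity
        obtain ⟨s, hs⟩ : ∃ s, k' j = s + 1 := ⟨k' j - 1, by omega⟩
        have hsplit1 : (∏ i, ρ i ^ k' i / ((k' i).factorial : ℝ))
            = (ρ j ^ k' j / ((k' j).factorial : ℝ))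
              * ∏ i ∈ Finset.univ.erase j, ρ i ^ k' i / ((k' i).factorial : ℝ) :=
          (Finset.mul_prod_erase _ _ (Finset.mem_univ j)).symm
        have hsplit2 : (∏ i, ρ i ^ (k' i - if j = i then 1 else 0)
              / (((k' i - if j = i then 1 else 0)).factorial : ℝ))
            = (ρ j ^ s / ((s).factorial : ℝ))
              * ∏ i ∈ Finset.univ.erase j, ρ i ^ k' i / ((k' i).factorial : ℝ) := by
          rw [← Finset.mul_prod_erase _ _ (Finset.mem_univ j)]
          congr 1
          · simp [hs]
          · apply Finset.prod_congr rfl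
            intro i hi
            have hij : ¬ (j = i) := fun h => (Finset.mem_erase.mp hi).1 h.symm
            simp [hij]
        rw [hsplit1, hsplit2, hs]
        have hfac : ((s+1).factorial : ℝ) = (s+1 : ℝ) * (s.factorial : ℝ) := by
          rw [Nat.factorial_succ]; push_cast; ring
        have hfs : (s.factorial : ℝ) ≠ 0 := Nat.cast_ne_zero.mpr (Nat.factorial_ne_zero s)
        rw [hfac]
        push_cast
        field_simp
        ring
    have hsum : ∑ j : Fin n, (∑ k' ∈ Finset.Nat.antidiagonalTuple n (t+1),
          (k' j : ℝ) * (F k' * ∏ i, ρ i ^ k' i / ((k' i).factorial : ℝ)))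
        = ((t:ℝ)+1) * ∑ k' ∈ Finset.Nat.antidiagonalTuple n (t+1),
            F k' * ∏ i, ρ i ^ k' i / ((k' i).factorial : ℝ) := by
      rw [Finset.sum_comm, Finset.mul_sum]
      apply Finset.sum_congr rfl
      intro k' hk'
      rw [Finset.Nat.mem_antidiagonalTuple] at hk'
      rw [← Finset.sum_mul]
      congr 1
      rw [← Nat.cast_sum, hk']
      push_cast; ring
    calc ∑ j : Fin n, ρ j * ((t.factorial : ℝ) * S1 j)
        = (t.factorial : ℝ) * ∑ j : Fin n, ρ j * S1 j := by
          rw [Finset.mul_sum]; apply Finset.sum_congr rfl; intro j _; ring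
      _ = (t.factorial : ℝ) * ∑ j : Fin n, (∑ k' ∈ Finset.Nat.antidiagonalTuple n (t+1),
            (k' j : ℝ) * (F k' * ∏ i, ρ i ^ k' i / ((k' i).factorial : ℝ))) := by
          rw [Finset.sum_congr rfl (fun j _ => (key j).symm)]
      _ = ((t+1).factorial : ℝ) * ∑ k ∈ Finset.Nat.antidiagonalTuple n (t+1),
            F k * ∏ i, ρ i ^ k i / ((k i).factorial : ℝ) := by
          rw [hsum, Nat.factorial_succ]
          push_cast; ring

-- L5: finite product of tsums in ℝ≥0∞
lemma prod_tsum_pi : ∀ (N : ℕ) (g : Fin N → ℕ → ℝ≥0∞),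
    ∏ i, ∑' k, g i k = ∑' k : Fin N → ℕ, ∏ i, g i (k i) := by
  intro N
  induction N with
  | zero =>
    intro g
    haveI : Unique (Fin 0 → ℕ) := ⟨⟨fun i => i.elim0⟩, fun f => funext fun i => i.elim0⟩
    rw [tsum_eq_single (default : Fin 0 → ℕ)
      (fun k hk => absurd (Subsingleton.elim k default) hk)]
    simp
  | succ N ih =>
    intro g
    rw [Fin.prod_univ_succ, ih (fun i => g i.succ),
      ← Equiv.tsum_eq (Fin.consEquiv (fun _ : Fin (N+1) => ℕ))
        (fun k : Fin (N+1) → ℕ => ∏ i, g i (k i)),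
      ENNReal.tsum_prod']
    rw [← ENNReal.tsum_mul_right]
    apply tsum_congr
    intro a
    rw [← ENNReal.tsum_mul_left]
    apply tsum_congr
    intro b
    simp only [Fin.consEquiv_apply]
    rw [Fin.prod_univ_succ]
    simp

-- L6: regroup a tsum over tuples by total sum
lemma tsum_pi_group {n : ℕ} (g : (Fin n → ℕ) → ℝ≥0∞) :
    ∑' k : Fin n → ℕ, g k
      = ∑' t : ℕ, ∑ k ∈ Finset.Nat.antidiagonalTuple n t, g k := by
  rw [← Equiv.tsum_eq (Equiv.sigmaFiberEquiv (fun k : Fin n → ℕ => ∑ i, k i)) g,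
    ENNReal.tsum_sigma']
  apply tsum_congr
  intro t
  have hset : {k : Fin n → ℕ | ∑ i, k i = t} = ↑(Finset.Nat.antidiagonalTuple n t) := by
    ext k; simp [Finset.Nat.mem_antidiagonalTuple]
  rw [← Finset.tsum_subtype (Finset.Nat.antidiagonalTuple n t) g]
  exact tsum_congr_set_coe g hset.symm ▸ rfl

-- L7: exponential tail in ℝ≥0∞
lemma exp_tail (mi : ℕ) (a : ℝ) (ha : 0 ≤ a) :
    ∑' k : ℕ, (if mi ≤ k then ENNReal.ofReal (a ^ k / (k.factorial : ℝ)) else 0)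
      = ENNReal.ofReal (Real.exp a - ∑ j ∈ Finset.range mi, a ^ j / (j.factorial : ℝ)) := by
  have hnn : ∀ k : ℕ, 0 ≤ a ^ k / (k.factorial : ℝ) :=
    fun k => div_nonneg (pow_nonneg ha k) (Nat.cast_nonneg _)
  have hsum : Summable (fun k : ℕ => a ^ k / (k.factorial : ℝ)) :=
    Real.summable_pow_div_factorial a
  have hexp : Real.exp a = ∑' k : ℕ, a ^ k / (k.factorial : ℝ) := by
    rw [Real.exp_eq_exp_ℝ, NormedSpace.exp_eq_tsum_div]
  have hofr : ENNReal.ofReal (Real.exp a)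
      = ∑' k : ℕ, ENNReal.ofReal (a ^ k / (k.factorial : ℝ)) := by
    rw [hexp]; exact ENNReal.ofReal_tsum_of_nonneg hnn hsum
  have hsplitpt : ∀ k : ℕ, ENNReal.ofReal (a ^ k / (k.factorial : ℝ))
      = (if k < mi then ENNReal.ofReal (a ^ k / (k.factorial : ℝ)) else 0)
        + (if mi ≤ k then ENNReal.ofReal (a ^ k / (k.factorial : ℝ)) else 0) := by
    intro k
    by_cases h : k < mi
    · rw [if_pos h, if_neg (by omega)]; simp
    · rw [if_neg h, if_pos (by omega)]; simp
  have hsplit : (∑' k : ℕ, ENNReal.ofReal (a ^ k / (k.factorial : ℝ)))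
      = ENNReal.ofReal (∑ j ∈ Finset.range mi, a ^ j / (j.factorial : ℝ))
        + ∑' k : ℕ, (if mi ≤ k then ENNReal.ofReal (a ^ k / (k.factorial : ℝ)) else 0) := by
    rw [tsum_congr hsplitpt, ENNReal.tsum_add]
    congr 1
    rw [tsum_eq_sum (s := Finset.range mi) (by intro b hb; rw [if_neg]; simpa using hb)]
    rw [ENNReal.ofReal_sum_of_nonneg (fun j _ => hnn j)]
    exact Finset.sum_congr rfl (fun j hj => if_pos (Finset.mem_range.mp hj))
  have htr : 0 ≤ ∑ j ∈ Finset.range mi, a ^ j / (j.factorial : ℝ) :=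
    Finset.sum_nonneg (fun j _ => hnn j)
  rw [ENNReal.ofReal_sub _ htr, hofr, hsplit]
  rw [ENNReal.add_sub_cancel_left ENNReal.ofReal_ne_top]

-- L8: Gamma integral
lemma lint_gamma (t : ℕ) :
    ∫⁻ x in Set.Ioi (0:ℝ), ENNReal.ofReal (Real.exp (-x) * x ^ t)
      = ENNReal.ofReal (t.factorial : ℝ) := by
  have h1 : Real.Gamma ((t:ℝ) + 1) = ∫ x in Set.Ioi (0:ℝ), Real.exp (-x) * x ^ (((t:ℝ)+1) - 1) :=
    Real.Gamma_eq_integral (by positivity)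
  have hint : IntegrableOn (fun x => Real.exp (-x) * x ^ (((t:ℝ)+1) - 1)) (Set.Ioi 0) :=
    Real.GammaIntegral_convergent (by positivity : (0:ℝ) < (t:ℝ)+1)
  have hae : ∀ᵐ x ∂(volume.restrict (Set.Ioi (0:ℝ))),
      Real.exp (-x) * x ^ (((t:ℝ)+1) - 1) = Real.exp (-x) * x ^ t := by
    filter_upwards [ae_restrict_mem measurableSet_Ioi] with x hx
    have : ((t:ℝ)+1) - 1 = (t:ℝ) := by ring
    rw [this, Real.rpow_natCast]
  have h2 : ENNReal.ofReal (Real.Gamma ((t:ℝ)+1))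
      = ∫⁻ x in Set.Ioi (0:ℝ), ENNReal.ofReal (Real.exp (-x) * x ^ (((t:ℝ)+1) - 1)) := by
    rw [h1]
    apply ofReal_integral_eq_lintegral_ofReal hint
    filter_upwards [ae_restrict_mem measurableSet_Ioi] with x hx
    have : (0:ℝ) < x := hx
    positivity
  rw [← Real.Gamma_nat_eq_factorial, h2]
  apply lintegral_congr_ae
  filter_upwards [hae] with x hx
  rw [hx]


/-- the probability that after `t` samples every `i` has appeared at least `m i` times -/
noncomputable def qq {n : ℕ} (ρ : Fin n → ℝ) (m : Fin n → ℕ) (t : ℕ) : ℝ :=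
  ∑ f ∈ Finset.univ.filter
      (fun f : Fin t → Fin n => ∀ i, m i ≤ ∑ u, if f u = i then 1 else 0),
    ∏ u, ρ (f u)

section
variable {Ω : Type*} [MeasurableSpace Ω] (μ : Measure Ω) [IsProbabilityMeasure μ]
  {n : ℕ} (ρ : Fin n → ℝ) (X : ℕ → Ω → Fin n) (m : Fin n → ℕ)

lemma count_bridge (ω : Ω) (t : ℕ) (i : Fin n) :
    ((Finset.range t).filter (fun u => X u ω = i)).card
      = ∑ u : Fin t, if X u.val ω = i then 1 else 0 := by
  classical
  rw [Finset.card_filter, ← Fin.sum_univ_eq_sum_range (fun u => if X u ω = i then 1 else 0) t]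

lemma meas_event (hρ0 : ∀ i, 0 ≤ ρ i) (hρsum : ∑ i, ρ i = 1)
    (hindep : iIndepFun (m := fun _ => (⊤ : MeasurableSpace (Fin n))) X μ)
    (hdist : ∀ t i, μ {ω | X t ω = i} = ENNReal.ofReal (ρ i)) (t : ℕ) :
    μ {ω | ∀ i, m i ≤ ((Finset.range t).filter (fun u => X u ω = i)).card}
      = ENNReal.ofReal (qq ρ m t) := by
  classical
  have hset : {ω | ∀ i, m i ≤ ((Finset.range t).filter (fun u => X u ω = i)).card}
      = {ω | (fun f : Fin t → Fin n => ∀ i, m i ≤ ∑ u, if f u = i then 1 else 0)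
          (fun u : Fin t => X u.val ω)} := by
    ext ω
    simp only [Set.mem_setOf_eq, count_bridge]
  rw [hset, part_meas μ ρ hρ0 hρsum X hindep hdist t
    (fun f : Fin t → Fin n => ∀ i, m i ≤ ∑ u, if f u = i then 1 else 0)]
  rfl

lemma meas_event_compl (hρ0 : ∀ i, 0 ≤ ρ i) (hρsum : ∑ i, ρ i = 1)
    (hindep : iIndepFun (m := fun _ => (⊤ : MeasurableSpace (Fin n))) X μ)
    (hdist : ∀ t i, μ {ω | X t ω = i} = ENNReal.ofReal (ρ i)) (t : ℕ) :
    μ {ω | ¬ ∀ i, m i ≤ ((Finset.range t).filter (fun u => X u ω = i)).card}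
      = ENNReal.ofReal (1 - qq ρ m t) := by
  classical
  have hset : {ω | ¬ ∀ i, m i ≤ ((Finset.range t).filter (fun u => X u ω = i)).card}
      = {ω | (fun f : Fin t → Fin n => ¬ ∀ i, m i ≤ ∑ u, if f u = i then 1 else 0)
          (fun u : Fin t => X u.val ω)} := by
    ext ω
    simp only [Set.mem_setOf_eq, count_bridge]
  rw [hset, part_meas μ ρ hρ0 hρsum X hindep hdist t
    (fun f : Fin t → Fin n => ¬ ∀ i, m i ≤ ∑ u, if f u = i then 1 else 0)]
  congr 1
  have htot : ∑ f : Fin t → Fin n, ∏ u, ρ (f u) = 1 := by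
    rw [← Fintype.piFinset_univ, ← Finset.prod_univ_sum (fun _ => Finset.univ) (fun _ j => ρ j)]
    simp [hρsum]
  have := Finset.sum_filter_add_sum_filter_not (Finset.univ : Finset (Fin t → Fin n))
    (fun f : Fin t → Fin n => ∀ i, m i ≤ ∑ u, if f u = i then 1 else 0)
    (fun f => ∏ u, ρ (f u))
  rw [htot] at this
  rw [qq]
  linarith [this]

/-- the block bound : probability that some item has not appeared `m i` times by `M*L` -/
lemma block_bound (hρ0 : ∀ i, 0 ≤ ρ i) (hρsum : ∑ i, ρ i = 1)
    (hindep : iIndepFun (m := fun _ => (⊤ : MeasurableSpace (Fin n))) X μ)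
    (hdist : ∀ t i, μ {ω | X t ω = i} = ENNReal.ofReal (ρ i))
    (M L : ℕ) (hM : ∀ i, m i ≤ M) :
    μ {ω | ¬ ∀ i, m i ≤ ((Finset.range (M*L)).filter (fun u => X u ω = i)).card}
      ≤ ∑ b ∈ Finset.range M, ∑ i : Fin n, ENNReal.ofReal ((1 - ρ i) ^ L) := by
  classical
  set B : ℕ → Fin n → Set Ω :=
    fun b i => {ω | ∀ u : ℕ, b*L ≤ u → u < (b+1)*L → X u ω ≠ i} with hB
  -- covering
  have hcov : {ω | ¬ ∀ i, m i ≤ ((Finset.range (M*L)).filter (fun u => X u ω = i)).card}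
      ⊆ ⋃ b ∈ Finset.range M, ⋃ i : Fin n, B b i := by
    intro ω hω
    simp only [Set.mem_setOf_eq] at hω
    by_contra hc
    apply hω
    have hwit : ∀ b < M, ∀ i : Fin n, ∃ u, b*L ≤ u ∧ u < (b+1)*L ∧ X u ω = i := by
      intro b hb i
      by_contra hno
      push_neg at hno
      apply hc
      refine Set.mem_biUnion (Finset.mem_range.mpr hb) (Set.mem_iUnion.mpr ⟨i, ?_⟩)
      intro u h1 h2
      exact hno u h1 h2
    intro i
    have claim : ∀ b, b ≤ M → b ≤ ((Finset.range (b*L)).filter (fun u => X u ω = i)).card := by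
      intro b
      induction b with
      | zero => intro _; exact Nat.zero_le _
      | succ b ihb =>
        intro hbM
        obtain ⟨u, hu1, hu2, hu3⟩ := hwit b (by omega) i
        have hnotmem : u ∉ (Finset.range (b*L)).filter (fun v => X v ω = i) := by
          simp only [Finset.mem_filter, Finset.mem_range]
          intro h
          exact absurd h.1 (by omega)
        have hsub : insert u ((Finset.range (b*L)).filter (fun v => X v ω = i))
            ⊆ (Finset.range ((b+1)*L)).filter (fun v => X v ω = i) := by
          intro v hv
          rcases Finset.mem_insert.mp hv with h | h
          · subst h
            exact Finset.mem_filter.mpr ⟨Finset.mem_range.mpr hu2, hu3⟩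
          · rcases Finset.mem_filter.mp h with ⟨h1, h2⟩
            refine Finset.mem_filter.mpr ⟨Finset.mem_range.mpr ?_, h2⟩
            have := Finset.mem_range.mp h1
            have hle : b*L ≤ (b+1)*L := Nat.mul_le_mul_right L (by omega)
            omega
        calc b + 1 ≤ (insert u ((Finset.range (b*L)).filter (fun v => X v ω = i))).card := by
              rw [Finset.card_insert_of_notMem hnotmem]
              have := ihb (by omega)
              omega
          _ ≤ _ := Finset.card_le_card hsub
    have := claim M le_rfl
    calc m i ≤ M := hM i
      _ ≤ _ := this
  -- bound each block event
  have hBle : ∀ b < M, ∀ i : Fin n, μ (B b i) ≤ ENNReal.ofReal ((1 - ρ i) ^ L) := by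
    intro b hb i
    have hset : B b i = {ω | (fun f : Fin (M*L) → Fin n =>
        ∀ u : Fin (M*L), b*L ≤ u.val → u.val < (b+1)*L → f u ≠ i)
          (fun u : Fin (M*L) => X u.val ω)} := by
      ext ω
      simp only [hB, Set.mem_setOf_eq]
      constructor
      · intro h u h1 h2
        exact h u.val h1 h2
      · intro h u h1 h2
        have hu : u < M*L := by
          have : (b+1) ≤ M := by omega
          have := Nat.mul_le_mul_right L this
          omega
        exact h ⟨u, hu⟩ h1 h2
    rw [hset, part_meas μ ρ hρ0 hρsum X hindep hdist (M*L)
      (fun f : Fin (M*L) → Fin n =>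
        ∀ u : Fin (M*L), b*L ≤ u.val → u.val < (b+1)*L → f u ≠ i)]
    apply ENNReal.ofReal_le_ofReal
    set C : Fin (M*L) → Finset (Fin n) :=
      fun u => if b*L ≤ u.val ∧ u.val < (b+1)*L then Finset.univ.erase i else Finset.univ with hC
    have hfilt : Finset.univ.filter (fun f : Fin (M*L) → Fin n =>
        ∀ u : Fin (M*L), b*L ≤ u.val → u.val < (b+1)*L → f u ≠ i) = Fintype.piFinset C := by
      ext f
      simp only [Finset.mem_filter, Finset.mem_univ, true_and, Fintype.mem_piFinset, hC]
      constructor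
      · intro h u
        by_cases hcond : b*L ≤ u.val ∧ u.val < (b+1)*L
        · rw [if_pos hcond]
          exact Finset.mem_erase.mpr ⟨h u hcond.1 hcond.2, Finset.mem_univ _⟩
        · rw [if_neg hcond]; exact Finset.mem_univ _
      · intro h u h1 h2
        have := h u
        rw [if_pos ⟨h1, h2⟩] at this
        exact (Finset.mem_erase.mp this).1
    rw [hfilt, ← Finset.prod_univ_sum C (fun _ j => ρ j)]
    have hterm : ∀ u : Fin (M*L),
        (∑ j ∈ C u, ρ j) = if b*L ≤ u.val ∧ u.val < (b+1)*L then 1 - ρ i else 1 := by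
      intro u
      simp only [hC]
      split
      · rw [Finset.sum_erase_eq_sub (Finset.mem_univ i), hρsum]
      · exact hρsum
    rw [Finset.prod_congr rfl (fun u _ => hterm u), Finset.prod_ite (fun _ => 1 - ρ i) (fun _ => (1:ℝ))]
    rw [Finset.prod_const, Finset.prod_const, one_pow, mul_one]
    have hcard : (Finset.univ.filter
        (fun u : Fin (M*L) => b*L ≤ u.val ∧ u.val < (b+1)*L)).card = L := by
      rw [Finset.card_filter, Fin.sum_univ_eq_sum_range
        (fun u => if b*L ≤ u ∧ u < (b+1)*L then 1 else 0) (M*L), ← Finset.card_filter]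
      have : (Finset.range (M*L)).filter (fun u => b*L ≤ u ∧ u < (b+1)*L)
          = Finset.Ico (b*L) ((b+1)*L) := by
        ext u
        simp only [Finset.mem_filter, Finset.mem_range, Finset.mem_Ico]
        have : (b+1) ≤ M := by omega
        have := Nat.mul_le_mul_right L this
        omega
      rw [this, Nat.card_Ico]
      have : (b+1)*L = b*L + L := by ring
      omega
    rw [hcard]
  -- combine
  calc μ _ ≤ μ (⋃ b ∈ Finset.range M, ⋃ i : Fin n, B b i) := measure_mono hcov
    _ ≤ ∑ b ∈ Finset.range M, μ (⋃ i : Fin n, B b i) := measure_biUnion_finset_le _ _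
    _ ≤ ∑ b ∈ Finset.range M, ∑ i : Fin n, ENNReal.ofReal ((1 - ρ i) ^ L) := by
      apply Finset.sum_le_sum
      intro b hb
      calc μ (⋃ i : Fin n, B b i) ≤ ∑' i : Fin n, μ (B b i) := measure_iUnion_le _
        _ = ∑ i : Fin n, μ (B b i) := tsum_fintype _
        _ ≤ ∑ i : Fin n, ENNReal.ofReal ((1 - ρ i) ^ L) :=
            Finset.sum_le_sum (fun i _ => hBle b (Finset.mem_range.mp hb) i)

end

section
variable {Ω : Type*} [MeasurableSpace Ω] (μ : Measure Ω) [IsProbabilityMeasure μ]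
  {n : ℕ} (ρ : Fin n → ℝ) (X : ℕ → Ω → Fin n) (m : Fin n → ℕ)

lemma tail_prob (hρpos : ∀ i, 0 < ρ i) (hρsum : ∑ i, ρ i = 1)
    (hindep : iIndepFun (m := fun _ => (⊤ : MeasurableSpace (Fin n))) X μ)
    (hdist : ∀ t i, μ {ω | X t ω = i} = ENNReal.ofReal (ρ i))
    (T : Ω → ℕ)
    (hT : ∀ ω, T ω = sInf {t : ℕ | ∀ i,
      m i ≤ ((Finset.range t).filter (fun u => X u ω = i)).card})
    (t : ℕ) :
    μ {ω | t < T ω} = ENNReal.ofReal (1 - qq ρ m t) := by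
  classical
  have hρ0 : ∀ i, 0 ≤ ρ i := fun i => (hρpos i).le
  set et : Ω → ℕ → Prop :=
    fun ω s => ∀ i, m i ≤ ((Finset.range s).filter (fun u => X u ω = i)).card with het
  have hup : ∀ ω s s', s ≤ s' → et ω s → et ω s' := by
    intro ω s s' hss h i
    refine le_trans (h i) (Finset.card_le_card ?_)
    exact Finset.filter_subset_filter _ (Finset.range_subset_range.mpr hss)
  have h1 : {ω | t < T ω} ⊆ {ω | ¬ et ω t} := by
    intro ω hω hmem
    have : T ω ≤ t := by
      rw [hT ω]; exact Nat.sInf_le hmem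
    exact absurd hω (by simpa using this)
  have h2 : ∀ s, {ω | ¬ et ω t} ⊆ {ω | t < T ω} ∪ {ω | ¬ et ω s} := by
    intro s ω hω
    by_cases hne : ∃ r, et ω r
    · left
      have hmem : et ω (T ω) := by
        rw [hT ω]
        exact Nat.sInf_mem hne
      by_contra hle
      simp only [Set.mem_setOf_eq, not_lt] at hle
      exact hω (hup ω (T ω) t hle hmem)
    · right
      push_neg at hne
      exact hne s
  have hupper : μ {ω | t < T ω} ≤ ENNReal.ofReal (1 - qq ρ m t) := by
    rw [← meas_event_compl μ ρ X m hρ0 hρsum hindep hdist t]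
    exact measure_mono h1
  refine le_antisymm hupper ?_
  apply ENNReal.le_of_forall_pos_le_add
  intro ε hε _
  -- find s with μ {¬ et s} ≤ ε
  set M : ℕ := (∑ i, m i) + 1 with hM
  have hMle : ∀ i, m i ≤ M := by
    intro i
    calc m i ≤ ∑ i, m i := Finset.single_le_sum (fun i _ => Nat.zero_le _) (Finset.mem_univ i)
      _ ≤ M := Nat.le_succ _
  have hρle1 : ∀ i, ρ i ≤ 1 := by
    intro i
    calc ρ i ≤ ∑ i, ρ i := Finset.single_le_sum (fun i _ => hρ0 i) (Finset.mem_univ i)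
      _ = 1 := hρsum
  have htend : Filter.Tendsto
      (fun L => ∑ b ∈ Finset.range M, ∑ i : Fin n, (1 - ρ i) ^ L)
      Filter.atTop (nhds 0) := by
    have : Filter.Tendsto
        (fun L => ∑ b ∈ Finset.range M, ∑ i : Fin n, (1 - ρ i) ^ L)
        Filter.atTop (nhds (∑ b ∈ Finset.range M, ∑ i : Fin n, (0:ℝ))) := by
      apply tendsto_finset_sum
      intro b _
      apply tendsto_finset_sum
      intro i _
      exact tendsto_pow_atTop_nhds_zero_of_lt_one (by linarith [hρle1 i]) (by linarith [hρpos i])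
    simpa using this
  have hev : ∃ L, ∑ b ∈ Finset.range M, ∑ i : Fin n, (1 - ρ i) ^ L < (ε : ℝ) := by
    have : ∀ᶠ L in Filter.atTop,
        ∑ b ∈ Finset.range M, ∑ i : Fin n, (1 - ρ i) ^ L < (ε : ℝ) :=
      htend.eventually_lt_const (by exact_mod_cast hε)
    exact this.exists
  obtain ⟨L, hL⟩ := hev
  have hblock := block_bound μ ρ X m hρ0 hρsum hindep hdist M L hMle
  have hblock' : μ {ω | ¬ et ω (M*L)} ≤ (ε : ℝ≥0∞) := by
    refine le_trans hblock ?_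
    have heq : (∑ b ∈ Finset.range M, ∑ i : Fin n, ENNReal.ofReal ((1 - ρ i) ^ L))
        = ENNReal.ofReal (∑ b ∈ Finset.range M, ∑ i : Fin n, (1 - ρ i) ^ L) := by
      rw [ENNReal.ofReal_sum_of_nonneg]
      · apply Finset.sum_congr rfl
        intro b _
        rw [ENNReal.ofReal_sum_of_nonneg]
        intro i _
        exact pow_nonneg (by linarith [hρle1 i]) L
      · intro b _
        exact Finset.sum_nonneg (fun i _ => pow_nonneg (by linarith [hρle1 i]) L)
    rw [heq]
    calc ENNReal.ofReal (∑ b ∈ Finset.range M, ∑ i : Fin n, (1 - ρ i) ^ L)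
        ≤ ENNReal.ofReal (ε : ℝ) := ENNReal.ofReal_le_ofReal hL.le
      _ = (ε : ℝ≥0∞) := ENNReal.ofReal_coe_nnreal
  calc ENNReal.ofReal (1 - qq ρ m t)
      = μ {ω | ¬ et ω t} := (meas_event_compl μ ρ X m hρ0 hρsum hindep hdist t).symm
    _ ≤ μ ({ω | t < T ω} ∪ {ω | ¬ et ω (M*L)}) := measure_mono (h2 (M*L))
    _ ≤ μ {ω | t < T ω} + μ {ω | ¬ et ω (M*L)} := measure_union_le _ _
    _ ≤ μ {ω | t < T ω} + (ε : ℝ≥0∞) := add_le_add_right hblock' _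
end



lemma series_id {n : ℕ} (ρ : Fin n → ℝ) (hρ0 : ∀ i, 0 ≤ ρ i) (m : Fin n → ℕ)
    (y : ℝ) (hy : 0 ≤ y) :
    ENNReal.ofReal (∏ i, (Real.exp (ρ i * y) - truncExp (m i) (ρ i * y)))
      = ∑' t : ℕ, ENNReal.ofReal (qq ρ m t * y ^ t / (t.factorial : ℝ)) := by
  classical
  have hay : ∀ i : Fin n, 0 ≤ ρ i * y := fun i => mul_nonneg (hρ0 i) hy
  have hfac_nn : ∀ i : Fin n, 0 ≤ Real.exp (ρ i * y) - truncExp (m i) (ρ i * y) := by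
    intro i
    have := Real.sum_le_exp_of_nonneg (hay i) (m i)
    simp only [truncExp]
    linarith
  rw [ofReal_prod_nn _ _ (fun i _ => hfac_nn i)]
  have hfac : ∀ i : Fin n, ENNReal.ofReal (Real.exp (ρ i * y) - truncExp (m i) (ρ i * y))
      = ∑' k : ℕ, (if m i ≤ k then ENNReal.ofReal ((ρ i * y) ^ k / (k.factorial : ℝ)) else 0) :=
    fun i => (exp_tail (m i) (ρ i * y) (hay i)).symm
  rw [Finset.prod_congr rfl (fun i _ => hfac i), prod_tsum_pi n
    (fun i k => if m i ≤ k then ENNReal.ofReal ((ρ i * y) ^ k / (k.factorial : ℝ)) else 0),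
    tsum_pi_group]
  apply tsum_congr
  intro t
  -- finset sum over compositions
  have hterm : ∀ k : Fin n → ℕ, k ∈ Finset.Nat.antidiagonalTuple n t →
      (∏ i, if m i ≤ k i then ENNReal.ofReal ((ρ i * y) ^ k i / ((k i).factorial : ℝ)) else 0)
        = ENNReal.ofReal (if ∀ i, m i ≤ k i
            then y ^ t * ((if ∀ i, m i ≤ k i then (1:ℝ) else 0)
              * ∏ i, ρ i ^ k i / ((k i).factorial : ℝ)) else 0) := by
    intro k hk
    rw [Finset.Nat.mem_antidiagonalTuple] at hk
    by_cases hall : ∀ i, m i ≤ k i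
    · rw [if_pos hall, if_pos hall, one_mul]
      rw [Finset.prod_congr rfl (fun i (_ : i ∈ Finset.univ) => if_pos (hall i))]
      rw [← ofReal_prod_nn _ _ (fun i _ =>
        div_nonneg (pow_nonneg (hay i) _) (Nat.cast_nonneg _))]
      congr 1
      rw [← hk, ← Finset.prod_pow_eq_pow_sum]
      rw [← Finset.prod_mul_distrib]
      apply Finset.prod_congr rfl
      intro i _
      rw [mul_pow]
      ring
    · rw [if_neg hall]
      obtain ⟨i0, hi0⟩ := not_forall.mp hall
      rw [Finset.prod_eq_zero (Finset.mem_univ i0)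
        (if_neg hi0 : (if m i0 ≤ k i0
          then ENNReal.ofReal ((ρ i0 * y) ^ k i0 / ((k i0).factorial : ℝ)) else 0) = 0)]
      simp
  rw [Finset.sum_congr rfl hterm]
  have hnn2 : ∀ k : Fin n → ℕ, (0:ℝ) ≤ (if ∀ i, m i ≤ k i
      then y ^ t * ((if ∀ i, m i ≤ k i then (1:ℝ) else 0)
        * ∏ i, ρ i ^ k i / ((k i).factorial : ℝ)) else 0) := by
    intro k
    by_cases h : ∀ i, m i ≤ k i
    · rw [if_pos h, if_pos h, one_mul]
      exact mul_nonneg (pow_nonneg hy t)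
        (Finset.prod_nonneg fun i _ => div_nonneg (pow_nonneg (hρ0 i) _) (Nat.cast_nonneg _))
    · rw [if_neg h]
  rw [← ENNReal.ofReal_sum_of_nonneg (fun k _ => hnn2 k)]
  congr 1
  have hsimp : ∀ k : Fin n → ℕ, (if ∀ i, m i ≤ k i
      then y ^ t * ((if ∀ i, m i ≤ k i then (1:ℝ) else 0)
        * ∏ i, ρ i ^ k i / ((k i).factorial : ℝ)) else 0)
      = y ^ t * ((if ∀ i, m i ≤ k i then (1:ℝ) else 0)
          * ∏ i, ρ i ^ k i / ((k i).factorial : ℝ)) := by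
    intro k
    by_cases h : ∀ i, m i ≤ k i
    · rw [if_pos h]
    · rw [if_neg h, if_neg h]; ring
  rw [Finset.sum_congr rfl (fun k _ => hsimp k), ← Finset.mul_sum]
  -- use keyG
  have hkey := keyG ρ t (fun k => if ∀ i, m i ≤ k i then (1:ℝ) else 0)
  have hqq : ∑ f : Fin t → Fin n,
      (if ∀ i, m i ≤ ∑ u, (if f u = i then 1 else 0) then (1:ℝ) else 0) * ∏ u, ρ (f u)
      = qq ρ m t := by
    rw [qq, Finset.sum_filter]
    apply Finset.sum_congr rfl
    intro f _
    split <;> simp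
  rw [hqq] at hkey
  have hfne : (t.factorial : ℝ) ≠ 0 := Nat.cast_ne_zero.mpr (Nat.factorial_ne_zero t)
  rw [show (∑ k ∈ Finset.Nat.antidiagonalTuple n t,
      (if ∀ i, m i ≤ k i then (1:ℝ) else 0) * ∏ i, ρ i ^ k i / ((k i).factorial : ℝ))
      = qq ρ m t / (t.factorial : ℝ) by
    rw [hkey, mul_div_cancel_left₀ _ hfne]]
  field_simp

lemma truncExp_cont (M : ℕ) : Continuous (truncExp M) := by
  unfold truncExp
  exact continuous_finset_sum _ (fun j _ => (continuous_pow j).div_const _)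

lemma truncExp_nonneg (M : ℕ) (a : ℝ) (ha : 0 ≤ a) : 0 ≤ truncExp M a :=
  Finset.sum_nonneg (fun j _ => div_nonneg (pow_nonneg ha j) (Nat.cast_nonneg _))

end AuxLemmas

/-- tail-probability generating function of the coupon collector's
brotherhood waiting time `T`:
`φ_T(z) = ∫_0^∞ { e^{-x(1-z)} - ∏_i [ e^{-ρ_i x(1-z)} - S_{m_i}(ρ_i x z) e^{-ρ_i x} ] } dx`
for `0 ≤ z ≤ 1`. -/
theorem stmt5
    (n : ℕ) (hn : 1 ≤ n)
    (ρ : Fin n → ℝ) (hρpos : ∀ i, 0 < ρ i) (hρsum : ∑ i, ρ i = 1)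
    (m : Fin n → ℕ) (hm : ∃ i, m i ≠ 0)
    (Ω : Type*) [MeasurableSpace Ω] (μ : Measure Ω) [IsProbabilityMeasure μ]
    -- i.i.d. samples, sample `t` equals `i` with probability `ρ i`
    (X : ℕ → Ω → Fin n)
    (hindep : iIndepFun (m := fun _ => (⊤ : MeasurableSpace (Fin n))) X μ)
    (hdist : ∀ t i, μ {ω | X t ω = i} = ENNReal.ofReal (ρ i))
    -- `T` : first time every item `i` has been drawn at least `m i` times
    (T : Ω → ℕ)
    (hT : ∀ ω, T ω = sInf {t : ℕ | ∀ i,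
      m i ≤ ((Finset.range t).filter (fun u => X u ω = i)).card})
    (z : ℝ) (hz0 : 0 ≤ z) (hz1 : z ≤ 1) :
    ∑' i : ℕ, (μ {ω | i < T ω}).toReal * z ^ i
      = ∫ x in Set.Ioi (0 : ℝ),
          (Real.exp (-(x * (1 - z)))
            - ∏ i, (Real.exp (-(ρ i * x * (1 - z)))
                - truncExp (m i) (ρ i * x * z) * Real.exp (-(ρ i * x)))) := by
  classical
  have hρ0 : ∀ i, 0 ≤ ρ i := fun i => (hρpos i).le
  set c : ℕ → ℝ := fun t => 1 - qq ρ m t with hc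
  have hq0 : ∀ t, 0 ≤ qq ρ m t := fun t =>
    Finset.sum_nonneg (fun f _ => Finset.prod_nonneg (fun u _ => hρ0 _))
  have htot : ∀ t : ℕ, ∑ f : Fin t → Fin n, ∏ u, ρ (f u) = 1 := by
    intro t
    rw [← Fintype.piFinset_univ, ← Finset.prod_univ_sum (fun _ => Finset.univ) (fun _ j => ρ j)]
    simp [hρsum]
  have hq1 : ∀ t, qq ρ m t ≤ 1 := by
    intro t
    rw [qq, ← htot t]
    exact Finset.sum_le_sum_of_subset_of_nonneg (Finset.filter_subset _ _)
      (fun f _ _ => Finset.prod_nonneg (fun u _ => hρ0 _))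
  have hc0 : ∀ t, 0 ≤ c t := fun t => by simp only [hc]; linarith [hq1 t]
  have htail : ∀ t, μ {ω | t < T ω} = ENNReal.ofReal (c t) := fun t =>
    tail_prob μ ρ X m hρpos hρsum hindep hdist T hT t
  -- the product part of the integrand, as a function of `y = x*z`
  set P : ℝ → ℝ := fun y => ∏ i, (Real.exp (ρ i * y) - truncExp (m i) (ρ i * y)) with hP
  set G : ℝ → ℝ := fun x => Real.exp (-(x * (1 - z)))
      - ∏ i, (Real.exp (-(ρ i * x * (1 - z)))
          - truncExp (m i) (ρ i * x * z) * Real.exp (-(ρ i * x))) with hG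
  have hGfact : ∀ x : ℝ, G x = Real.exp (-x) * (Real.exp (x * z) - P (x * z)) := by
    intro x
    have h1 : ∀ i : Fin n,
        Real.exp (-(ρ i * x * (1 - z))) - truncExp (m i) (ρ i * x * z) * Real.exp (-(ρ i * x))
          = Real.exp (-(ρ i * x)) * (Real.exp (ρ i * (x * z)) - truncExp (m i) (ρ i * (x * z))) := by
      intro i
      have harg : -(ρ i * x * (1 - z)) = (-(ρ i * x)) + ρ i * (x * z) := by ring
      rw [harg, Real.exp_add]
      have harg2 : ρ i * x * z = ρ i * (x * z) := by ring
      rw [harg2]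
      ring
    have hsum : ∑ i : Fin n, -(ρ i * x) = -x := by
      have : ∑ i : Fin n, -(ρ i * x) = -((∑ i, ρ i) * x) := by
        rw [Finset.sum_mul, ← Finset.sum_neg_distrib]
      rw [this, hρsum, one_mul]
    have h2 : -(x * (1 - z)) = -x + x * z := by ring
    simp only [hG, hP]
    rw [Finset.prod_congr rfl (fun i _ => h1 i), Finset.prod_mul_distrib, ← Real.exp_sum,
      hsum, h2, Real.exp_add]
    ring
  have hPnn : ∀ y : ℝ, 0 ≤ y → 0 ≤ P y := by
    intro y hy
    apply Finset.prod_nonneg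
    intro i _
    have := Real.sum_le_exp_of_nonneg (mul_nonneg (hρ0 i) hy) (m i)
    simp only [truncExp]
    linarith
  have hPle : ∀ y : ℝ, 0 ≤ y → P y ≤ Real.exp y := by
    intro y hy
    have h1 : P y ≤ ∏ i : Fin n, Real.exp (ρ i * y) := by
      apply Finset.prod_le_prod
      · intro i _
        have := Real.sum_le_exp_of_nonneg (mul_nonneg (hρ0 i) hy) (m i)
        simp only [truncExp]
        linarith
      · intro i _
        have h0 := truncExp_nonneg (m i) (ρ i * y) (mul_nonneg (hρ0 i) hy)
        linarith
    calc P y ≤ ∏ i : Fin n, Real.exp (ρ i * y) := h1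
      _ = Real.exp (∑ i, ρ i * y) := (Real.exp_sum _ _).symm
      _ = Real.exp y := by rw [← Finset.sum_mul, hρsum, one_mul]
  have hGnn : ∀ x : ℝ, 0 ≤ x → 0 ≤ G x := by
    intro x hx
    rw [hGfact x]
    have := hPle (x * z) (mul_nonneg hx hz0)
    have := Real.exp_pos (-x)
    nlinarith
  have hexp_expand : ∀ y : ℝ, 0 ≤ y →
      ENNReal.ofReal (Real.exp y) = ∑' t : ℕ, ENNReal.ofReal (y ^ t / (t.factorial : ℝ)) := by
    intro y hy
    have h := exp_tail 0 y hy
    simp only [Nat.zero_le, if_true, Finset.range_zero, Finset.sum_empty, sub_zero] at h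
    exact h.symm
  have hSid : ∀ y : ℝ, 0 ≤ y → ENNReal.ofReal (P y)
      = ∑' t : ℕ, ENNReal.ofReal (qq ρ m t * y ^ t / (t.factorial : ℝ)) := by
    intro y hy
    rw [hP]
    exact series_id ρ hρ0 m y hy
  have hGen : ∀ y : ℝ, 0 ≤ y → ENNReal.ofReal (Real.exp y - P y)
      = ∑' t : ℕ, ENNReal.ofReal (c t * y ^ t / (t.factorial : ℝ)) := by
    intro y hy
    have hsplit : ∀ t : ℕ, ENNReal.ofReal (y ^ t / (t.factorial : ℝ))
        = ENNReal.ofReal (qq ρ m t * y ^ t / (t.factorial : ℝ))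
          + ENNReal.ofReal (c t * y ^ t / (t.factorial : ℝ)) := by
      intro t
      rw [← ENNReal.ofReal_add
        (div_nonneg (mul_nonneg (hq0 t) (pow_nonneg hy t)) (Nat.cast_nonneg _))
        (div_nonneg (mul_nonneg (hc0 t) (pow_nonneg hy t)) (Nat.cast_nonneg _))]
      congr 1
      simp only [hc]
      ring
    have h2 : ENNReal.ofReal (Real.exp y)
        = ENNReal.ofReal (P y) + ∑' t : ℕ, ENNReal.ofReal (c t * y ^ t / (t.factorial : ℝ)) := by
      rw [hexp_expand y hy, tsum_congr hsplit, ENNReal.tsum_add, hSid y hy]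
    rw [ENNReal.ofReal_sub _ (hPnn y hy), h2, ENNReal.add_sub_cancel_left ENNReal.ofReal_ne_top]
  have hpoint : ∀ x : ℝ, 0 < x → ENNReal.ofReal (G x)
      = ∑' t : ℕ, ENNReal.ofReal (c t * z ^ t / (t.factorial : ℝ))
          * ENNReal.ofReal (Real.exp (-x) * x ^ t) := by
    intro x hx
    rw [hGfact x, ENNReal.ofReal_mul (Real.exp_nonneg _), hGen (x * z) (by positivity),
      ← ENNReal.tsum_mul_left]
    apply tsum_congr
    intro t
    rw [← ENNReal.ofReal_mul (Real.exp_nonneg _),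
      ← ENNReal.ofReal_mul
        (div_nonneg (mul_nonneg (hc0 t) (pow_nonneg hz0 t)) (Nat.cast_nonneg _))]
    congr 1
    rw [mul_pow]
    ring
  have hmeas : ∀ t : ℕ, Measurable (fun x : ℝ => ENNReal.ofReal (Real.exp (-x) * x ^ t)) := by
    intro t
    exact ((Real.measurable_exp.comp measurable_neg).mul (measurable_id.pow_const t)).ennreal_ofReal
  have hlint : ∫⁻ x in Set.Ioi (0:ℝ), ENNReal.ofReal (G x)
      = ∑' t : ℕ, ENNReal.ofReal (c t * z ^ t) := by
    rw [setLIntegral_congr_fun measurableSet_Ioi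
      (fun x hx => hpoint x hx)]
    rw [lintegral_tsum (fun t => (((hmeas t).const_mul _).aemeasurable))]
    apply tsum_congr
    intro t
    rw [lintegral_const_mul _ (hmeas t), lint_gamma t,
      ← ENNReal.ofReal_mul
        (div_nonneg (mul_nonneg (hc0 t) (pow_nonneg hz0 t)) (Nat.cast_nonneg _))]
    congr 1
    have hfne : (t.factorial : ℝ) ≠ 0 := Nat.cast_ne_zero.mpr (Nat.factorial_ne_zero t)
    field_simp
  have hcont : Continuous G := by
    rw [hG]
    apply Continuous.sub
    · exact Real.continuous_exp.comp (continuous_id.mul continuous_const).neg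
    · apply continuous_finset_prod
      intro i _
      apply Continuous.sub
      · exact Real.continuous_exp.comp
          ((continuous_const.mul continuous_id).mul continuous_const).neg
      · exact ((truncExp_cont (m i)).comp
            ((continuous_const.mul continuous_id).mul continuous_const)).mul
          (Real.continuous_exp.comp (continuous_const.mul continuous_id).neg)
  have hint : ∫ x in Set.Ioi (0:ℝ), G x = (∑' t : ℕ, ENNReal.ofReal (c t * z ^ t)).toReal := by
    rw [integral_eq_lintegral_of_nonneg_ae, hlint]
    · exact (ae_restrict_iff' measurableSet_Ioi).mpr
        (Filter.Eventually.of_forall (fun x hx => hGnn x (le_of_lt hx)))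
    · exact hcont.aestronglyMeasurable.restrict
  calc ∑' i : ℕ, (μ {ω | i < T ω}).toReal * z ^ i
      = ∑' t : ℕ, (ENNReal.ofReal (c t * z ^ t)).toReal := by
        apply tsum_congr
        intro t
        rw [htail t, ENNReal.toReal_ofReal (hc0 t),
          ENNReal.toReal_ofReal (mul_nonneg (hc0 t) (pow_nonneg hz0 t))]
    _ = (∑' t : ℕ, ENNReal.ofReal (c t * z ^ t)).toReal :=
        (ENNReal.tsum_toReal_eq (fun t => ENNReal.ofReal_ne_top)).symm
    _ = ∫ x in Set.Ioi (0:ℝ), G x := hint.symm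
    _ = _ := by rw [hG]
end

section
/- In the uniform coupon collector's brotherhood problem with n coupons, the expected number of samples T_n(m) needed to collect at least m copies of every coupon satisfies E[T_n(m)] = n ∫_0^∞ [ 1 - (1 - S_m(x) e^{-x})^n ] dx, where S_m(x) = ∑_{j=0}^{m-1} x^j/j!. -/
open MeasureTheory ProbabilityTheory Finset Real

/-- Good functions: every fiber has at least `m` elements. -/
def goodA (m n : ℕ) (α : Type*) [Fintype α] [DecidableEq α] : Finset (α → Fin n) :=
  Finset.univ.filter (fun f => ∀ i, m ≤ #(Finset.univ.filter (fun u => f u = i)))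

noncomputable def gcount (m n t : ℕ) : ℕ := (goodA m n (Fin t)).card

lemma filter_comp_equiv_card {α β : Type*} [Fintype α] [DecidableEq α] [Fintype β]
    [DecidableEq β] (e : α ≃ β) (p : α → Prop) [DecidablePred p] :
    #(Finset.univ.filter (fun b => p (e.symm b))) = #(Finset.univ.filter p) := by
  refine Finset.card_bij' (fun b _ => e.symm b) (fun a _ => e a) ?_ ?_ ?_ ?_ <;>
    simp [Finset.mem_filter]

lemma goodA_card_congr (m n : ℕ) {α β : Type*} [Fintype α] [DecidableEq α] [Fintype β]
    [DecidableEq β] (e : α ≃ β) : (goodA m n α).card = (goodA m n β).card := by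
  refine Finset.card_bij' (fun f _ => f ∘ e.symm) (fun g _ => g ∘ e) ?_ ?_ ?_ ?_
  · intro f hf
    simp only [goodA, Finset.mem_filter, Finset.mem_univ, true_and] at hf ⊢
    intro i
    simp only [Function.comp_apply]
    rw [filter_comp_equiv_card e (fun a => f a = i)]
    exact hf i
  · intro g hg
    simp only [goodA, Finset.mem_filter, Finset.mem_univ, true_and] at hg ⊢
    intro i
    simp only [Function.comp_apply]
    have := filter_comp_equiv_card e.symm (fun b => g b = i)
    simp only [Equiv.symm_symm] at this
    rw [this]
    exact hg i
  · intro f _; funext a; simp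
  · intro g _; funext b; simp

lemma gcount_eq (m n : ℕ) (α : Type*) [Fintype α] [DecidableEq α] :
    (goodA m n α).card = gcount m n (Fintype.card α) :=
  goodA_card_congr m n (Fintype.equivFinOfCardEq rfl)

lemma gcount_le (m n t : ℕ) : gcount m n t ≤ n ^ t := by
  classical
  calc gcount m n t ≤ (Finset.univ : Finset (Fin t → Fin n)).card := Finset.card_le_card (Finset.filter_subset _ _)
  _ = n ^ t := by simp [Finset.card_univ]

lemma gcount_zero_left (m t : ℕ) : gcount m 0 t = if t = 0 then 1 else 0 := by
  classical
  rcases Nat.eq_zero_or_pos t with rfl | ht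
  · simp only [if_pos rfl]
    rw [gcount, goodA]
    rw [Finset.filter_true_of_mem]
    · simp [Finset.card_univ]
    · intro f _ i; exact i.elim0
  · rw [if_neg ht.ne', gcount]
    refine Finset.card_eq_zero.2 (Finset.eq_empty_of_forall_notMem ?_)
    intro f _
    exact ((f ⟨0, ht⟩).elim0)

lemma mem_goodA {m n : ℕ} {α : Type*} [Fintype α] [DecidableEq α] {f : α → Fin n} :
    f ∈ goodA m n α ↔ ∀ i, m ≤ #(Finset.univ.filter (fun u => f u = i)) := by
  simp [goodA]

lemma card_filter_subtype {α : Type*} [Fintype α] [DecidableEq α] (s : Finset α)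
    (p : α → Prop) [DecidablePred p] (h : ∀ a, p a → a ∈ s) :
    #(Finset.univ.filter (fun u : {x // x ∈ s} => p u.1)) = #(Finset.univ.filter p) := by
  refine Finset.card_bij' (fun u _ => u.1) (fun v hv => ⟨v, h v (by simpa using hv)⟩)
    ?_ ?_ ?_ ?_ <;> simp [Finset.mem_filter]

lemma gcount_succ (m n t : ℕ) :
    gcount m (n+1) t
      = ∑ j ∈ Finset.range (t+1), if m ≤ j then t.choose j * gcount m n (t - j) else 0 := by
  classical
  have key : ∀ s : Finset (Fin t),
      #((goodA m (n+1) (Fin t)).filter (fun f => Finset.univ.filter (fun u => f u = Fin.last n) = s))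
        = if m ≤ #s then gcount m n (t - #s) else 0 := by
    intro s
    by_cases hms : m ≤ #s
    · rw [if_pos hms]
      have hcard : gcount m n (t - #s) = (goodA m n {x // x ∈ sᶜ}).card := by
        rw [gcount_eq m n {x // x ∈ sᶜ}]
        congr 1
        simp [Fintype.card_coe, Finset.card_compl]
      rw [hcard]
      refine Finset.card_bij'
        (fun f hf => fun u => Fin.castPred (f u.1)
          (by
            rcases Finset.mem_filter.1 hf with ⟨-, hfs⟩
            intro hlast
            have hmem : (u : Fin t) ∈ Finset.univ.filter (fun u => f u = Fin.last n) := by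
              simp [hlast]
            rw [hfs] at hmem
            exact (Finset.mem_compl.1 u.2) hmem))
        (fun g hg => fun v => if h : v ∈ s then Fin.last n
          else (g ⟨v, Finset.mem_compl.2 h⟩).castSucc)
        ?_ ?_ ?_ ?_
      · -- forward membership
        intro f hf
        rcases Finset.mem_filter.1 hf with ⟨hgood, hfs⟩
        rw [mem_goodA]
        intro i
        simp only [Fin.castPred_eq_iff_eq_castSucc]
        rw [card_filter_subtype sᶜ (fun v => f v = i.castSucc)
          (fun v hv => Finset.mem_compl.2 (fun hvs => ?_))]
        · exact mem_goodA.1 hgood i.castSucc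
        · have hlv : f v = Fin.last n := by
            have hmem := hfs ▸ hvs
            simpa using hmem
          simp only [hlv] at hv
          exact absurd hv.symm (ne_of_lt (Fin.castSucc_lt_last i))
      · -- backward membership
        intro g hg
        have hfib : ∀ v : Fin t,
            (if h : v ∈ s then Fin.last n else (g ⟨v, Finset.mem_compl.2 h⟩).castSucc)
              = Fin.last n ↔ v ∈ s := by
          intro v
          by_cases h : v ∈ s
          · simp [h]
          · simp only [dif_neg h]
            constructor
            · intro hc; exact absurd hc (ne_of_lt (Fin.castSucc_lt_last _))
            · intro hc; exact absurd hc h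
        have hfilter : Finset.univ.filter (fun v : Fin t =>
            (if h : v ∈ s then Fin.last n else (g ⟨v, Finset.mem_compl.2 h⟩).castSucc)
              = Fin.last n) = s := by
          ext v
          simp only [Finset.mem_filter, Finset.mem_univ, true_and]
          exact hfib v
        refine Finset.mem_filter.2 ⟨mem_goodA.2 ?_, hfilter⟩
        intro i
        induction i using Fin.lastCases with
        | last => rw [hfilter]; exact hms
        | cast i =>
          have hcardeq :
              #(Finset.univ.filter (fun v : Fin t =>
                (if h : v ∈ s then Fin.last n else (g ⟨v, Finset.mem_compl.2 h⟩).castSucc)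
                  = i.castSucc))
                = #(Finset.univ.filter (fun u : {x // x ∈ sᶜ} => g u = i)) := by
            refine (Finset.card_bij'
              (fun v hv => (⟨v, ?_⟩ : {x // x ∈ sᶜ}))
              (fun u _ => u.1) ?_ ?_ ?_ ?_)
            · rcases Finset.mem_filter.1 hv with ⟨-, hv2⟩
              by_cases h : v ∈ s
              · rw [dif_pos h] at hv2
                exact absurd hv2.symm (ne_of_lt (Fin.castSucc_lt_last i))
              · exact Finset.mem_compl.2 h
            · intro v hv
              rcases Finset.mem_filter.1 hv with ⟨-, hv2⟩
              have h : v ∉ s := by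
                intro hvs
                rw [dif_pos hvs] at hv2
                exact absurd hv2.symm (ne_of_lt (Fin.castSucc_lt_last i))
              rw [dif_neg h] at hv2
              refine Finset.mem_filter.2 ⟨Finset.mem_univ _, ?_⟩
              exact Fin.castSucc_injective _ hv2
            · intro u hu
              rcases Finset.mem_filter.1 hu with ⟨-, hu2⟩
              refine Finset.mem_filter.2 ⟨Finset.mem_univ _, ?_⟩
              have h : (u : Fin t) ∉ s := Finset.mem_compl.1 u.2
              rw [dif_neg h]
              exact congrArg Fin.castSucc hu2
            · intro v hv; rfl
            · intro u hu; rfl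
          rw [hcardeq]
          exact mem_goodA.1 hg i
      · -- left inverse
        intro f hf
        rcases Finset.mem_filter.1 hf with ⟨-, hfs⟩
        funext v
        dsimp only
        by_cases h : v ∈ s
        · rw [dif_pos h]
          have : f v = Fin.last n := by
            have := hfs ▸ h
            simpa using this
          exact this.symm
        · rw [dif_neg h, Fin.castSucc_castPred]
      · -- right inverse
        intro g hg
        funext u
        have h : (u : Fin t) ∉ s := Finset.mem_compl.1 u.2
        simp only [dif_neg h, Fin.castPred_castSucc]
    · rw [if_neg hms]
      refine Finset.card_eq_zero.2 (Finset.eq_empty_of_forall_notMem ?_)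
      intro f hf
      rcases Finset.mem_filter.1 hf with ⟨hgood, hfs⟩
      exact hms (hfs ▸ mem_goodA.1 hgood (Fin.last n))
  have h1 := Finset.card_eq_sum_card_fiberwise
    (f := fun f : Fin t → Fin (n+1) => Finset.univ.filter (fun u => f u = Fin.last n))
    (s := goodA m (n+1) (Fin t)) (t := (Finset.univ : Finset (Fin t)).powerset)
    (fun f _ => Finset.mem_powerset.2 (Finset.subset_univ _))
  rw [gcount, h1, Finset.sum_powerset]
  have hcu : #(Finset.univ : Finset (Fin t)) = t := by simp
  rw [hcu]
  refine Finset.sum_congr rfl (fun j hj => ?_)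
  have : ∀ s ∈ Finset.powersetCard j (Finset.univ : Finset (Fin t)),
      #((goodA m (n+1) (Fin t)).filter
        (fun f => Finset.univ.filter (fun u => f u = Fin.last n) = s))
        = if m ≤ j then gcount m n (t - j) else 0 := by
    intro s hs
    rw [key s, (Finset.mem_powersetCard.1 hs).2]
  rw [Finset.sum_congr rfl this, Finset.sum_const, Finset.card_powersetCard, hcu, smul_eq_mul]
  by_cases hmj : m ≤ j
  · rw [if_pos hmj, if_pos hmj]
  · rw [if_neg hmj, if_neg hmj, mul_zero]

lemma card_fiber_le (n t : ℕ) (i : Fin n) (s : Finset (Fin t)) :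
    #(Finset.univ.filter (fun f : Fin t → Fin n => Finset.univ.filter (fun v => f v = i) = s))
      ≤ (n-1) ^ (t - #s) := by
  classical
  have hle : #(Finset.univ.filter
      (fun f : Fin t → Fin n => Finset.univ.filter (fun v => f v = i) = s))
      ≤ #(Fintype.piFinset (fun _ : {x // x ∈ sᶜ} => (Finset.univ : Finset (Fin n)).erase i)) := by
    refine Finset.card_le_card_of_injOn (fun f u => f u.1) ?_ ?_
    · intro f hf
      rcases Finset.mem_filter.1 hf with ⟨-, hfs⟩
      rw [Finset.mem_coe, Fintype.mem_piFinset]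
      intro u
      refine Finset.mem_erase.2 ⟨?_, Finset.mem_univ _⟩
      intro hc
      have hmem : (u : Fin t) ∈ Finset.univ.filter (fun v => f v = i) :=
        Finset.mem_filter.2 ⟨Finset.mem_univ _, hc⟩
      rw [hfs] at hmem
      exact Finset.mem_compl.1 u.2 hmem
    · intro f hf f' hf' heq
      rcases Finset.mem_coe.1 hf |> Finset.mem_filter.1 with ⟨-, hfs⟩
      rcases Finset.mem_coe.1 hf' |> Finset.mem_filter.1 with ⟨-, hfs'⟩
      funext v
      by_cases hv : v ∈ s
      · have h1 : f v = i := by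
          have := hfs ▸ hv; simpa using this
        have h2 : f' v = i := by
          have := hfs' ▸ hv; simpa using this
        rw [h1, h2]
      · exact congrFun heq ⟨v, Finset.mem_compl.2 hv⟩
  calc #(Finset.univ.filter
      (fun f : Fin t → Fin n => Finset.univ.filter (fun v => f v = i) = s))
      ≤ #(Fintype.piFinset (fun _ : {x // x ∈ sᶜ} => (Finset.univ : Finset (Fin n)).erase i)) := hle
    _ = (n-1) ^ (t - #s) := by
        rw [Fintype.card_piFinset]
        simp [Finset.card_erase_of_mem, Finset.card_compl]

lemma bad_card_le (m n t : ℕ) :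
    n ^ t - gcount m n t ≤ n * ∑ j ∈ Finset.range m, t.choose j * (n-1) ^ (t - j) := by
  classical
  have h0 : n ^ t - gcount m n t = #((Finset.univ : Finset (Fin t → Fin n)) \ goodA m n (Fin t)) := by
    rw [Finset.card_sdiff_of_subset (Finset.subset_univ _)]
    congr 1
    simp [Finset.card_univ]
  rw [h0]
  have hsub : (Finset.univ : Finset (Fin t → Fin n)) \ goodA m n (Fin t)
      ⊆ Finset.biUnion Finset.univ
        (fun i : Fin n => Finset.univ.filter
          (fun f : Fin t → Fin n => #(Finset.univ.filter (fun v => f v = i)) < m)) := by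
    intro f hf
    rcases Finset.mem_sdiff.1 hf with ⟨-, hbad⟩
    rw [mem_goodA] at hbad
    push_neg at hbad
    rcases hbad with ⟨i, hi⟩
    exact Finset.mem_biUnion.2 ⟨i, Finset.mem_univ _, Finset.mem_filter.2 ⟨Finset.mem_univ _, hi⟩⟩
  refine le_trans (Finset.card_le_card hsub) (le_trans Finset.card_biUnion_le ?_)
  have hbound : ∀ i : Fin n,
      #(Finset.univ.filter (fun f : Fin t → Fin n => #(Finset.univ.filter (fun v => f v = i)) < m))
        ≤ ∑ j ∈ Finset.range m, t.choose j * (n-1) ^ (t - j) := by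
    intro i
    set B := Finset.univ.filter
      (fun f : Fin t → Fin n => #(Finset.univ.filter (fun v => f v = i)) < m) with hB
    have h1 := Finset.card_eq_sum_card_fiberwise
      (f := fun f : Fin t → Fin n => Finset.univ.filter (fun v => f v = i))
      (s := B) (t := (Finset.univ : Finset (Fin t)).powerset)
      (fun f _ => Finset.mem_powerset.2 (Finset.subset_univ _))
    rw [h1, Finset.sum_powerset]
    have hcu : #(Finset.univ : Finset (Fin t)) = t := by simp
    rw [hcu]
    have hterm : ∀ j ∈ Finset.range (t+1), ∀ s ∈ Finset.powersetCard j (Finset.univ : Finset (Fin t)),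
        #(B.filter (fun f => Finset.univ.filter (fun v => f v = i) = s))
          ≤ if j < m then (n-1) ^ (t - j) else 0 := by
      intro j hj s hs
      have hsc : #s = j := (Finset.mem_powersetCard.1 hs).2
      by_cases hjm : j < m
      · rw [if_pos hjm]
        calc #(B.filter (fun f => Finset.univ.filter (fun v => f v = i) = s))
            ≤ #(Finset.univ.filter (fun f : Fin t → Fin n => Finset.univ.filter (fun v => f v = i) = s)) := by
              refine Finset.card_le_card ?_
              intro f hf
              rcases Finset.mem_filter.1 hf with ⟨-, h2⟩
              exact Finset.mem_filter.2 ⟨Finset.mem_univ _, h2⟩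
          _ ≤ (n-1) ^ (t - #s) := card_fiber_le n t i s
          _ = (n-1) ^ (t - j) := by rw [hsc]
      · rw [if_neg hjm]
        refine le_of_eq (Finset.card_eq_zero.2 (Finset.eq_empty_of_forall_notMem ?_))
        intro f hf
        rcases Finset.mem_filter.1 hf with ⟨hfB, h2⟩
        rcases Finset.mem_filter.1 hfB with ⟨-, h3⟩
        rw [h2, hsc] at h3
        exact hjm h3
    calc ∑ j ∈ Finset.range (t+1), ∑ s ∈ Finset.powersetCard j (Finset.univ : Finset (Fin t)),
          #(B.filter (fun f => Finset.univ.filter (fun v => f v = i) = s))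
        ≤ ∑ j ∈ Finset.range (t+1), ∑ _s ∈ Finset.powersetCard j (Finset.univ : Finset (Fin t)),
          (if j < m then (n-1) ^ (t - j) else 0) := by
          refine Finset.sum_le_sum (fun j hj => Finset.sum_le_sum (fun s hs => hterm j hj s hs))
      _ = ∑ j ∈ Finset.range (t+1), (if j < m then t.choose j * (n-1) ^ (t - j) else 0) := by
          refine Finset.sum_congr rfl (fun j hj => ?_)
          rw [Finset.sum_const, Finset.card_powersetCard, hcu, smul_eq_mul]
          by_cases hjm : j < m
          · rw [if_pos hjm, if_pos hjm]
          · rw [if_neg hjm, if_neg hjm, mul_zero]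
      _ ≤ ∑ j ∈ Finset.range m, t.choose j * (n-1) ^ (t - j) := by
          rw [← Finset.sum_filter]
          refine Finset.sum_le_sum_of_subset ?_
          intro j hj
          rcases Finset.mem_filter.1 hj with ⟨-, hjm⟩
          exact Finset.mem_range.2 hjm
  calc ∑ i : Fin n, #(Finset.univ.filter
        (fun f : Fin t → Fin n => #(Finset.univ.filter (fun v => f v = i)) < m))
      ≤ ∑ _i : Fin n, ∑ j ∈ Finset.range m, t.choose j * (n-1) ^ (t - j) :=
        Finset.sum_le_sum (fun i _ => hbound i)
    _ = n * ∑ j ∈ Finset.range m, t.choose j * (n-1) ^ (t - j) := by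
        rw [Finset.sum_const, Finset.card_univ, Fintype.card_fin, smul_eq_mul]


lemma real_exp_tsum (x : ℝ) : Real.exp x = ∑' j : ℕ, x ^ j / (j.factorial : ℝ) := by
  rw [Real.exp_eq_exp_ℝ, NormedSpace.exp_eq_tsum_div]

lemma summable_ind (m : ℕ) {x : ℝ} (hx : 0 ≤ x) :
    Summable (fun j : ℕ => if m ≤ j then x ^ j / (j.factorial : ℝ) else 0) := by
  refine Summable.of_nonneg_of_le (fun j => ?_) (fun j => ?_) (Real.summable_pow_div_factorial x)
  · split <;> positivity
  · split
    · exact le_rfl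
    · positivity

lemma exp_sub_trunc (m : ℕ) {x : ℝ} (hx : 0 ≤ x) :
    Real.exp x - truncExp m x = ∑' j : ℕ, if m ≤ j then x ^ j / (j.factorial : ℝ) else 0 := by
  have h1 : Summable (fun j : ℕ => if m ≤ j then (0:ℝ) else x ^ j / (j.factorial : ℝ)) :=
    summable_of_ne_finset_zero (s := Finset.range m) (by
      intro j hj
      rw [if_pos (le_of_not_gt (fun h => hj (Finset.mem_range.2 h)))])
  have h2 : truncExp m x = ∑' j : ℕ, if m ≤ j then (0:ℝ) else x ^ j / (j.factorial : ℝ) := by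
    rw [tsum_eq_sum (s := Finset.range m) (by
      intro j hj
      rw [if_pos (le_of_not_gt (fun h => hj (Finset.mem_range.2 h)))])]
    refine Finset.sum_congr rfl (fun j hj => ?_)
    rw [if_neg (not_le.2 (Finset.mem_range.1 hj))]
  rw [h2, real_exp_tsum, ← Summable.tsum_sub (Real.summable_pow_div_factorial x) h1]
  refine tsum_congr (fun j => ?_)
  by_cases h : m ≤ j
  · rw [if_pos h, if_pos h, sub_zero]
  · rw [if_neg h, if_neg h, sub_self]

lemma summable_g (m n : ℕ) {x : ℝ} (hx : 0 ≤ x) :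
    Summable (fun t : ℕ => (gcount m n t : ℝ) * x ^ t / (t.factorial : ℝ)) := by
  refine Summable.of_nonneg_of_le (fun t => by positivity) (fun t => ?_)
    ((Real.summable_pow_div_factorial (n * x)))
  have h1 : (gcount m n t : ℝ) ≤ (n : ℝ) ^ t := by
    exact_mod_cast Nat.cast_le.2 (gcount_le m n t)
  calc (gcount m n t : ℝ) * x ^ t / (t.factorial : ℝ)
      ≤ (n : ℝ) ^ t * x ^ t / (t.factorial : ℝ) := by
        gcongr
    _ = ((n : ℝ) * x) ^ t / (t.factorial : ℝ) := by rw [mul_pow]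

lemma series_eq (m n : ℕ) {x : ℝ} (hx : 0 ≤ x) :
    (Real.exp x - truncExp m x) ^ n
      = ∑' t : ℕ, (gcount m n t : ℝ) * x ^ t / (t.factorial : ℝ) := by
  induction n with
  | zero =>
    rw [pow_zero, tsum_eq_single 0 (fun t ht => by
      rw [gcount_zero_left, if_neg ht]; simp)]
    rw [gcount_zero_left, if_pos rfl]
    simp
  | succ n ih =>
    have hnorm1 : Summable (fun t : ℕ => ‖(gcount m n t : ℝ) * x ^ t / (t.factorial : ℝ)‖) := by
      refine (summable_g m n hx).congr (fun t => ?_)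
      rw [Real.norm_eq_abs, abs_of_nonneg (by positivity)]
    have hnorm2 : Summable (fun j : ℕ => ‖if m ≤ j then x ^ j / (j.factorial : ℝ) else 0‖) := by
      refine (summable_ind m hx).congr (fun j => ?_)
      rw [Real.norm_eq_abs, abs_of_nonneg (by split <;> positivity)]
    rw [pow_succ, ih, exp_sub_trunc m hx,
      tsum_mul_tsum_eq_tsum_sum_antidiagonal_of_summable_norm hnorm1 hnorm2]
    refine tsum_congr (fun t => ?_)
    rw [Finset.Nat.sum_antidiagonal_eq_sum_range_succ_mk, gcount_succ,
      ← Finset.sum_range_reflect, Nat.cast_sum, Finset.sum_mul, Finset.sum_div]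
    refine Finset.sum_congr rfl (fun j hj => ?_)
    dsimp only
    have hjt : j ≤ t := Nat.lt_succ_iff.1 (Finset.mem_range.1 hj)
    have hrfl : t + 1 - 1 - j = t - j := by omega
    rw [hrfl]
    have hsub : t - (t - j) = j := by omega
    rw [hsub]
    by_cases hmj : m ≤ j
    · rw [if_pos hmj, if_pos hmj]
      have hfac : (t.choose j : ℝ) * (j.factorial : ℝ) * ((t - j).factorial : ℝ)
          = (t.factorial : ℝ) := by
        exact_mod_cast congrArg (Nat.cast : ℕ → ℝ) (Nat.choose_mul_factorial_mul_factorial hjt)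
      have hxpow : x ^ (t - j) * x ^ j = x ^ t := by
        rw [← pow_add]
        congr 1
        omega
      rw [div_mul_div_comm, mul_assoc, hxpow]
      push_cast
      rw [div_eq_div_iff
        (by positivity : (0:ℝ) < ((t-j).factorial : ℝ) * ((j).factorial : ℝ)).ne'
        (by positivity : (0:ℝ) < ((t).factorial : ℝ)).ne', ← hfac]
      ring
    · rw [if_neg hmj, if_neg hmj]
      simp

noncomputable def btail (m n t : ℕ) : ℝ := 1 - (gcount m n t : ℝ) / (n : ℝ) ^ t

lemma gdiv_le_one {m n t : ℕ} (hn : 1 ≤ n) : (gcount m n t : ℝ) / (n : ℝ) ^ t ≤ 1 := by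
  have hnp : (0:ℝ) < (n:ℝ) ^ t := by positivity
  rw [div_le_one hnp]
  exact_mod_cast Nat.cast_le.2 (gcount_le m n t) |>.trans (by push_cast; exact le_rfl)

lemma btail_nonneg {m n t : ℕ} (hn : 1 ≤ n) : 0 ≤ btail m n t :=
  sub_nonneg.2 (gdiv_le_one hn)

lemma btail_le_one {m n t : ℕ} : btail m n t ≤ 1 := by
  have : (0:ℝ) ≤ (gcount m n t : ℝ) / (n : ℝ) ^ t := by positivity
  simp only [btail]
  linarith

lemma btail_eq {m n : ℕ} (hn : 1 ≤ n) (t : ℕ) :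
    btail m n t = ((n ^ t - gcount m n t : ℕ) : ℝ) / (n : ℝ) ^ t := by
  have hnp : (0:ℝ) < (n:ℝ) ^ t := by positivity
  rw [Nat.cast_sub (gcount_le m n t), btail]
  push_cast
  field_simp

lemma summable_btail (m : ℕ) {n : ℕ} (hn : 1 ≤ n) : Summable (btail m n) := by
  have hn0 : (0:ℝ) < n := by exact_mod_cast hn
  have hn1 : (0:ℝ) ≤ (n:ℝ) - 1 := by
    have : (1:ℝ) ≤ n := by exact_mod_cast hn
    linarith
  set r : ℝ := ((n:ℝ) - 1) / n with hr
  have hr0 : 0 ≤ r := div_nonneg hn1 hn0.le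
  have hr1 : r < 1 := by
    rw [hr, div_lt_one hn0]; linarith
  -- the building block bounds
  have hBj : ∀ j : ℕ, Summable (fun t : ℕ =>
      (t.choose j : ℝ) * ((n:ℝ) - 1) ^ (t - j) / (n : ℝ) ^ t) := by
    intro j
    rw [← summable_nat_add_iff j]
    refine Summable.of_nonneg_of_le (fun t => by positivity) (fun t => ?_)
      (((summable_pow_mul_geometric_of_norm_lt_one j
          (r := r) (by rwa [Real.norm_eq_abs, abs_of_nonneg hr0])).mul_left ((2:ℝ)^j)).add
        ((summable_geometric_of_lt_one hr0 hr1).mul_left ((2*(j:ℝ))^j)))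
    have hsub : t + j - j = t := by omega
    rw [hsub]
    have h1 : ((t+j).choose j : ℝ) ≤ ((t:ℝ) + j) ^ j := by
      calc ((t+j).choose j : ℝ) ≤ ((t+j : ℕ) : ℝ) ^ j := by
            exact_mod_cast Nat.choose_le_pow (t+j) j
        _ = ((t:ℝ) + j) ^ j := by push_cast; ring
    have h2 : ((n:ℝ) - 1) ^ t / (n:ℝ) ^ (t + j) ≤ r ^ t := by
      rw [hr, div_pow, pow_add]
      rw [div_le_div_iff₀ (by positivity) (by positivity)]
      have hnj : (1:ℝ) ≤ (n:ℝ) ^ j := one_le_pow₀ (by exact_mod_cast hn)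
      have hmul : (n:ℝ)^t ≤ (n:ℝ)^t * (n:ℝ)^j := le_mul_of_one_le_right (by positivity) hnj
      exact mul_le_mul_of_nonneg_left hmul (pow_nonneg hn1 t)
    have h3 : ((t:ℝ) + j) ^ j ≤ 2^j * (t:ℝ)^j + (2*(j:ℝ))^j := by
      rcases le_total (j:ℝ) (t:ℝ) with h | h
      · calc ((t:ℝ) + j) ^ j ≤ (2 * (t:ℝ)) ^ j := by
              apply pow_le_pow_left₀ (by positivity); linarith
          _ = 2^j * (t:ℝ)^j := by rw [mul_pow]
          _ ≤ 2^j * (t:ℝ)^j + (2*(j:ℝ))^j := le_add_of_nonneg_right (by positivity)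
      · calc ((t:ℝ) + j) ^ j ≤ (2 * (j:ℝ)) ^ j := by
              apply pow_le_pow_left₀ (by positivity); linarith
          _ ≤ 2^j * (t:ℝ)^j + (2*(j:ℝ))^j := le_add_of_nonneg_left (by positivity)
    calc ((t+j).choose j : ℝ) * ((n:ℝ) - 1) ^ t / (n : ℝ) ^ (t + j)
        = ((t+j).choose j : ℝ) * (((n:ℝ) - 1) ^ t / (n : ℝ) ^ (t + j)) := by ring
      _ ≤ ((t:ℝ) + j) ^ j * r ^ t := by
          have hc0 : (0:ℝ) ≤ ((t+j).choose j : ℝ) := by positivity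
          have hd0 : (0:ℝ) ≤ ((n:ℝ) - 1) ^ t / (n : ℝ) ^ (t + j) :=
            div_nonneg (pow_nonneg hn1 t) (by positivity)
          exact mul_le_mul h1 h2 hd0 (by positivity)
      _ ≤ (2^j * (t:ℝ)^j + (2*(j:ℝ))^j) * r ^ t := by
          apply mul_le_mul_of_nonneg_right h3 (by positivity)
      _ = 2^j * ((t:ℝ)^j * r^t) + (2*(j:ℝ))^j * r ^ t := by ring
  have hbound : Summable (fun t : ℕ => (n:ℝ) * ∑ j ∈ Finset.range m,
      (t.choose j : ℝ) * ((n:ℝ) - 1) ^ (t - j) / (n : ℝ) ^ t) :=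
    (summable_sum (fun j _ => hBj j)).mul_left _
  refine Summable.of_nonneg_of_le (fun t => btail_nonneg hn) (fun t => ?_) hbound
  rw [btail_eq hn]
  have hle := bad_card_le m n t
  have hcast : ((n ^ t - gcount m n t : ℕ) : ℝ)
      ≤ (n:ℝ) * ∑ j ∈ Finset.range m, (t.choose j : ℝ) * ((n:ℝ) - 1) ^ (t - j) := by
    calc ((n ^ t - gcount m n t : ℕ) : ℝ)
        ≤ ((n * ∑ j ∈ Finset.range m, t.choose j * (n-1) ^ (t - j) : ℕ) : ℝ) := by
          exact_mod_cast hle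
      _ = (n:ℝ) * ∑ j ∈ Finset.range m, (t.choose j : ℝ) * ((n:ℝ) - 1) ^ (t - j) := by
          push_cast [Nat.cast_sub hn]
          ring
  have hnp : (0:ℝ) < (n:ℝ) ^ t := by positivity
  calc ((n ^ t - gcount m n t : ℕ) : ℝ) / (n:ℝ)^t
      ≤ ((n:ℝ) * ∑ j ∈ Finset.range m, (t.choose j : ℝ) * ((n:ℝ) - 1) ^ (t - j)) / (n:ℝ)^t := by
        gcongr
    _ = (n:ℝ) * ∑ j ∈ Finset.range m, (t.choose j:ℝ) * ((n:ℝ)-1)^(t-j) / (n:ℝ)^t := by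
        rw [Finset.mul_sum, Finset.mul_sum, Finset.sum_div]
        refine Finset.sum_congr rfl (fun j _ => by ring)

open MeasureTheory in
lemma integrable_pow_exp {n : ℕ} (hn : 1 ≤ n) (t : ℕ) :
    IntegrableOn (fun x : ℝ => x ^ t * Real.exp (-((n:ℝ) * x))) (Set.Ioi 0) := by
  have hgamma := Real.GammaIntegral_convergent (s := (t:ℝ) + 1) (by positivity)
  refine Integrable.mono hgamma ?_ ?_
  · exact (Continuous.aestronglyMeasurable (by continuity)).restrict
  · refine (ae_restrict_iff' measurableSet_Ioi).2 (Filter.Eventually.of_forall (fun x hx => ?_))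
    have hx0 : (0:ℝ) < x := hx
    rw [Real.norm_eq_abs, Real.norm_eq_abs, abs_of_nonneg (by positivity),
      abs_of_nonneg (by positivity)]
    have h1 : Real.exp (-((n:ℝ) * x)) ≤ Real.exp (-x) := by
      apply Real.exp_le_exp.2
      have : (1:ℝ) ≤ n := by exact_mod_cast hn
      nlinarith
    have h2 : x ^ ((t:ℝ) + 1 - 1) = x ^ t := by
      rw [show (t:ℝ) + 1 - 1 = (t:ℝ) by ring, Real.rpow_natCast]
    rw [h2]
    calc x ^ t * Real.exp (-((n:ℝ) * x)) ≤ x ^ t * Real.exp (-x) := by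
          apply mul_le_mul_of_nonneg_left h1 (by positivity)
      _ = Real.exp (-x) * x ^ t := by ring

open MeasureTheory in
lemma integral_pow_exp {n : ℕ} (hn : 1 ≤ n) (t : ℕ) :
    ∫ x in Set.Ioi (0:ℝ), x ^ t * Real.exp (-((n:ℝ) * x))
      = (t.factorial : ℝ) / (n:ℝ) ^ (t+1) := by
  have hn0 : (0:ℝ) < n := by exact_mod_cast hn
  have h := Real.integral_rpow_mul_exp_neg_mul_Ioi (a := (t:ℝ) + 1) (r := (n:ℝ))
    (by positivity) hn0
  have h2 : ∀ x : ℝ, x ^ ((t:ℝ) + 1 - 1) = x ^ t := by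
    intro x
    rw [show (t:ℝ) + 1 - 1 = (t:ℝ) by ring, Real.rpow_natCast]
  rw [show ∫ x in Set.Ioi (0:ℝ), x ^ t * Real.exp (-((n:ℝ) * x))
      = ∫ x in Set.Ioi (0:ℝ), x ^ ((t:ℝ) + 1 - 1) * Real.exp (-((n:ℝ) * x)) by
    refine setIntegral_congr_fun measurableSet_Ioi (fun x hx => ?_)
    rw [h2 x]]
  rw [h]
  rw [show (t:ℝ) + 1 = ((t + 1 : ℕ) : ℝ) by push_cast; ring, Real.rpow_natCast]
  rw [show ((t + 1 : ℕ) : ℝ) = (t:ℝ) + 1 by push_cast; ring, Real.Gamma_nat_eq_factorial]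
  rw [div_pow, one_pow, div_mul_eq_mul_div, one_mul]

noncomputable def qfun (m n t : ℕ) (x : ℝ) : ℝ :=
  btail m n t * (((n:ℝ) * x) ^ t / (t.factorial : ℝ)) * Real.exp (-((n:ℝ) * x))

lemma qfun_nonneg {m n t : ℕ} (hn : 1 ≤ n) {x : ℝ} (hx : 0 ≤ x) : 0 ≤ qfun m n t x := by
  have h1 := btail_nonneg (m := m) (t := t) hn
  have h2 : (0:ℝ) ≤ ((n:ℝ) * x) ^ t / (t.factorial : ℝ) := by positivity
  have h3 : (0:ℝ) ≤ Real.exp (-((n:ℝ) * x)) := (Real.exp_pos _).le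
  unfold qfun
  exact mul_nonneg (mul_nonneg h1 h2) h3

lemma summable_qfun (m : ℕ) {n : ℕ} (hn : 1 ≤ n) {x : ℝ} (hx : 0 ≤ x) :
    Summable (fun t => qfun m n t x) := by
  refine Summable.of_nonneg_of_le (fun t => qfun_nonneg hn hx) (fun t => ?_)
    (((Real.summable_pow_div_factorial ((n:ℝ) * x)).mul_right (Real.exp (-((n:ℝ) * x)))))
  unfold qfun
  have h2 : (0:ℝ) ≤ ((n:ℝ) * x) ^ t / (t.factorial : ℝ) := by positivity
  have h3 : (0:ℝ) ≤ Real.exp (-((n:ℝ) * x)) := (Real.exp_pos _).le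
  have h4 : btail m n t * (((n:ℝ) * x) ^ t / (t.factorial : ℝ))
      ≤ ((n:ℝ) * x) ^ t / (t.factorial : ℝ) :=
    mul_le_of_le_one_left h2 btail_le_one
  exact mul_le_mul_of_nonneg_right h4 h3

lemma pointwise_eq (m : ℕ) {n : ℕ} (hn : 1 ≤ n) {x : ℝ} (hx : 0 ≤ x) :
    1 - (1 - truncExp m x * Real.exp (-x)) ^ n = ∑' t, qfun m n t x := by
  have hfact : 1 - truncExp m x * Real.exp (-x)
      = (Real.exp x - truncExp m x) * Real.exp (-x) := by
    rw [sub_mul, ← Real.exp_add]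
    simp
  have hexpn : (Real.exp (-x)) ^ n = Real.exp (-((n:ℝ) * x)) := by
    rw [← Real.exp_nat_mul]
    ring_nf
  have hterm : ∀ t : ℕ, qfun m n t x
      = (((n:ℝ) * x) ^ t / (t.factorial : ℝ) - (gcount m n t : ℝ) * x ^ t / (t.factorial : ℝ))
        * Real.exp (-((n:ℝ) * x)) := by
    intro t
    unfold qfun btail
    have hnt : ((n:ℝ)) ^ t ≠ 0 := by positivity
    rw [mul_pow]
    field_simp
  rw [tsum_congr hterm, tsum_mul_right,
    Summable.tsum_sub (Real.summable_pow_div_factorial _) (summable_g m n hx)]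
  rw [← real_exp_tsum ((n:ℝ) * x), ← series_eq m n hx, hfact, mul_pow, hexpn]
  rw [sub_mul, ← Real.exp_add]
  simp [mul_comm]

open MeasureTheory in
lemma qfun_integrable (m : ℕ) {n : ℕ} (hn : 1 ≤ n) (t : ℕ) :
    IntegrableOn (fun x => qfun m n t x) (Set.Ioi (0:ℝ)) := by
  have h : (fun x => qfun m n t x)
      = fun x => (btail m n t * (n:ℝ)^t / (t.factorial : ℝ)) * (x ^ t * Real.exp (-((n:ℝ)*x))) := by
    funext x
    unfold qfun
    rw [mul_pow]
    ring
  rw [h]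
  exact (integrable_pow_exp hn t).smul (btail m n t * (n:ℝ)^t / (t.factorial : ℝ))

open MeasureTheory in
lemma qfun_integral (m : ℕ) {n : ℕ} (hn : 1 ≤ n) (t : ℕ) :
    ∫ x in Set.Ioi (0:ℝ), qfun m n t x = btail m n t / n := by
  have h : (fun x => qfun m n t x)
      = fun x => (btail m n t * (n:ℝ)^t / (t.factorial : ℝ)) * (x ^ t * Real.exp (-((n:ℝ)*x))) := by
    funext x
    unfold qfun
    rw [mul_pow]
    ring
  rw [h, integral_const_mul, integral_pow_exp hn t]
  have hn0 : (n:ℝ) ≠ 0 := by positivity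
  have hf : (t.factorial : ℝ) ≠ 0 := Nat.cast_ne_zero.2 (Nat.factorial_ne_zero _)
  field_simp
  ring

open MeasureTheory in
lemma rhs_eq (m : ℕ) {n : ℕ} (hn : 1 ≤ n) :
    (n:ℝ) * ∫ x in Set.Ioi (0:ℝ), (1 - (1 - truncExp m x * Real.exp (-x)) ^ n)
      = ∑' t, btail m n t := by
  have hcont : Continuous (fun x : ℝ => 1 - (1 - truncExp m x * Real.exp (-x)) ^ n) := by
    apply Continuous.sub continuous_const
    apply Continuous.pow
    apply Continuous.sub continuous_const
    apply Continuous.mul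
    · unfold truncExp
      exact continuous_finset_sum _ (fun j _ => (continuous_pow j).div_const _)
    · exact (Real.continuous_exp.comp continuous_neg)
  have hFeq : ∀ x ∈ Set.Ioi (0:ℝ),
      1 - (1 - truncExp m x * Real.exp (-x)) ^ n = ∑' t, qfun m n t x :=
    fun x hx => pointwise_eq m hn (le_of_lt hx)
  have hF0 : ∀ x ∈ Set.Ioi (0:ℝ),
      0 ≤ 1 - (1 - truncExp m x * Real.exp (-x)) ^ n := by
    intro x hx
    rw [hFeq x hx]
    exact tsum_nonneg (fun t => qfun_nonneg hn (le_of_lt hx))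
  rw [integral_eq_lintegral_of_nonneg_ae
    ((ae_restrict_iff' measurableSet_Ioi).2 (Filter.Eventually.of_forall hF0))
    hcont.aestronglyMeasurable.restrict]
  have hlin : ∫⁻ x in Set.Ioi (0:ℝ),
      ENNReal.ofReal (1 - (1 - truncExp m x * Real.exp (-x)) ^ n)
        = ENNReal.ofReal ((∑' t, btail m n t) / n) := by
    have step1 : ∫⁻ x in Set.Ioi (0:ℝ),
        ENNReal.ofReal (1 - (1 - truncExp m x * Real.exp (-x)) ^ n)
          = ∫⁻ x in Set.Ioi (0:ℝ), ∑' t, ENNReal.ofReal (qfun m n t x) := by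
      refine lintegral_congr_ae ((ae_restrict_iff' measurableSet_Ioi).2
        (Filter.Eventually.of_forall (fun x hx => ?_)))
      dsimp only
      rw [hFeq x hx, ENNReal.ofReal_tsum_of_nonneg
        (fun t => qfun_nonneg hn (le_of_lt hx)) (summable_qfun m hn (le_of_lt hx))]
    have step2 : ∫⁻ x in Set.Ioi (0:ℝ), ∑' t, ENNReal.ofReal (qfun m n t x)
        = ∑' t, ∫⁻ x in Set.Ioi (0:ℝ), ENNReal.ofReal (qfun m n t x) := by
      refine lintegral_tsum (fun t => ?_)
      have hc : Continuous (fun x => qfun m n t x) := by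
        unfold qfun
        apply Continuous.mul
        · apply Continuous.mul continuous_const
          exact ((continuous_const.mul continuous_id).pow t).div_const _
        · exact Real.continuous_exp.comp (continuous_const.mul continuous_id).neg
      exact (ENNReal.continuous_ofReal.comp hc).measurable.aemeasurable
    have step3 : ∀ t : ℕ, ∫⁻ x in Set.Ioi (0:ℝ), ENNReal.ofReal (qfun m n t x)
        = ENNReal.ofReal (btail m n t / n) := by
      intro t
      rw [← ofReal_integral_eq_lintegral_ofReal (qfun_integrable m hn t)
        ((ae_restrict_iff' measurableSet_Ioi).2
          (Filter.Eventually.of_forall (fun x hx => qfun_nonneg hn (le_of_lt hx)))),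
        qfun_integral m hn t]
    rw [step1, step2, tsum_congr step3,
      ← ENNReal.ofReal_tsum_of_nonneg (fun t => by
          exact div_nonneg (btail_nonneg hn) (by positivity))
        ((summable_btail m hn).div_const _)]
    congr 1
    exact tsum_div_const
  rw [hlin, ENNReal.toReal_ofReal (by
    have h1 : (0:ℝ) ≤ ∑' t, btail m n t := tsum_nonneg (fun t => btail_nonneg hn)
    positivity)]
  have hn0 : (n:ℝ) ≠ 0 := by
    have : (0:ℝ) < n := by exact_mod_cast hn
    exact this.ne'
  field_simp

open MeasureTheory in
lemma nullMeasurable_of_partition {Ω : Type*} [MeasurableSpace Ω] (μ : Measure Ω)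
    [IsProbabilityMeasure μ] {ι : Type*} [Fintype ι] [DecidableEq ι] (A : ι → Set Ω)
    (hcover : ∀ ω, ∃ i, ω ∈ A i) (hsum : ∑ i, μ (A i) = 1)
    (hdisj : ∀ i j, i ≠ j → Disjoint (A i) (A j)) (i : ι) :
    NullMeasurableSet (A i) μ := by
  set H : ι → Set Ω := fun j => toMeasurable μ (A j) with hH
  set U : Set Ω := ⋃ j ∈ Finset.univ.erase i, H j with hU
  have hUmeas : MeasurableSet U := by
    refine MeasurableSet.biUnion (Finset.countable_toSet _) (fun j _ => ?_)
    exact measurableSet_toMeasurable μ (A j)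
  have hKsub : Uᶜ ⊆ A i := by
    intro ω hω
    rcases hcover ω with ⟨j, hj⟩
    by_cases hji : j = i
    · exact hji ▸ hj
    · exfalso
      apply hω
      refine Set.mem_biUnion (Finset.mem_coe.2 (Finset.mem_erase.2 ⟨hji, Finset.mem_univ _⟩)) ?_
      exact subset_toMeasurable μ (A j) hj
  have hAH : A i ⊆ H i := subset_toMeasurable μ (A i)
  have hS : μ (A i) + ∑ j ∈ Finset.univ.erase i, μ (A j) = 1 := by
    exact (Finset.add_sum_erase _ (fun j => μ (A j)) (Finset.mem_univ i)).trans hsum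
  have hSfin : ∑ j ∈ Finset.univ.erase i, μ (A j) ≠ ⊤ := by
    intro hc
    rw [hc, add_top] at hS
    exact ENNReal.top_ne_one hS
  have hAi_eq : μ (A i) = 1 - ∑ j ∈ Finset.univ.erase i, μ (A j) :=
    ENNReal.eq_sub_of_add_eq hSfin hS
  have hU_le : μ U ≤ ∑ j ∈ Finset.univ.erase i, μ (A j) := by
    refine le_trans (measure_biUnion_finset_le _ _) ?_
    refine Finset.sum_le_sum (fun j _ => ?_)
    rw [measure_toMeasurable]
  have hK : μ (A i) ≤ μ Uᶜ := by
    rw [prob_compl_eq_one_sub hUmeas, hAi_eq]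
    exact tsub_le_tsub_left hU_le 1
  have hdiff : μ (H i \ Uᶜ) = 0 := by
    have hsub : Uᶜ ⊆ H i := hKsub.trans hAH
    rw [measure_diff hsub hUmeas.compl.nullMeasurableSet (measure_ne_top μ _)]
    rw [measure_toMeasurable]
    exact tsub_eq_zero_of_le hK
  refine ⟨H i, measurableSet_toMeasurable μ (A i), ?_⟩
  rw [MeasureTheory.ae_eq_set]
  constructor
  · rw [Set.diff_eq_empty.2 hAH]
    exact measure_empty
  · refine measure_mono_null (fun ω hω => ?_) hdiff
    exact ⟨hω.1, fun hc => hω.2 (hKsub hc)⟩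

open MeasureTheory in
lemma lintegral_nat_tail {Ω : Type*} [MeasurableSpace Ω] (μ : Measure Ω)
    (T : Ω → ℕ) (hT : Measurable T) :
    ∫⁻ ω, (T ω : ENNReal) ∂μ = ∑' t : ℕ, μ {ω | t < T ω} := by
  have hpt : ∀ k : ℕ, (k : ENNReal) = ∑' t : ℕ, if t < k then 1 else 0 := by
    intro k
    rw [tsum_eq_sum (s := Finset.range k) (fun t ht => by
      rw [if_neg (fun hc => ht (Finset.mem_range.2 hc))])]
    rw [Finset.sum_congr rfl (fun t ht => if_pos (Finset.mem_range.1 ht))]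
    simp
  have h1 : ∫⁻ ω, (T ω : ENNReal) ∂μ
      = ∫⁻ ω, ∑' t : ℕ, Set.indicator {ω | t < T ω} (fun _ => 1) ω ∂μ := by
    refine lintegral_congr (fun ω => ?_)
    rw [hpt (T ω)]
    refine tsum_congr (fun t => ?_)
    rw [Set.indicator_apply]
    simp only [Set.mem_setOf_eq]
  rw [h1, lintegral_tsum (fun t => ?_)]
  · refine tsum_congr (fun t => ?_)
    have hmeas : MeasurableSet {ω | t < T ω} := hT measurableSet_Ioi
    rw [show (fun _ : Ω => (1:ENNReal)) = (1 : Ω → ENNReal) from rfl,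
      lintegral_indicator_one hmeas]
  · have hmeas : MeasurableSet {ω | t < T ω} := hT measurableSet_Ioi
    exact ((measurable_const (a := (1:ENNReal))).indicator hmeas).aemeasurable

open MeasureTheory ProbabilityTheory in
lemma lhs_eq
    (n : ℕ) (hn : 1 ≤ n) (m : ℕ) (hm : 1 ≤ m)
    (Ω : Type*) [MeasurableSpace Ω] (μ : Measure Ω) [IsProbabilityMeasure μ]
    (X : ℕ → Ω → Fin n)
    (hindep : iIndepFun (m := fun _ => (⊤ : MeasurableSpace (Fin n))) X μ)
    (hdist : ∀ t i, μ {ω | X t ω = i} = ENNReal.ofReal (1 / (n : ℝ)))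
    (T : Ω → ℕ)
    (hT : ∀ ω, T ω = sInf {t : ℕ | ∀ i : Fin n,
      m ≤ ((Finset.range t).filter (fun u => X u ω = i)).card}) :
    ∫ ω, (T ω : ℝ) ∂μ = ∑' t, btail m n t := by
  classical
  have hn0 : (0:ℝ) < n := by exact_mod_cast hn
  -- the elementary events are null measurable
  have hAnm : ∀ (u : ℕ) (i : Fin n), NullMeasurableSet {ω | X u ω = i} μ := by
    intro u i
    refine nullMeasurable_of_partition μ (fun i => {ω | X u ω = i}) (fun ω => ⟨X u ω, rfl⟩)
      ?_ (fun i j hij => Set.disjoint_left.2 (fun ω h1 h2 => hij (h1.symm.trans h2))) i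
    rw [Finset.sum_congr rfl (fun i _ => hdist u i), Finset.sum_const, Finset.card_univ,
      Fintype.card_fin, nsmul_eq_mul]
    rw [ENNReal.ofReal_div_of_pos hn0, ENNReal.ofReal_one, ENNReal.ofReal_natCast]
    rw [mul_one_div, ENNReal.div_self (by exact_mod_cast Nat.pos_iff_ne_zero.mp hn) (ENNReal.natCast_ne_top n)]
  -- cylinder events
  have hC : ∀ (t : ℕ) (f : Fin t → Fin n),
      μ {ω | ∀ v : Fin t, X v ω = f v} = ENNReal.ofReal (1 / (n : ℝ)) ^ t := by
    intro t f
    have hne : Nonempty (Fin n) := ⟨⟨0, hn⟩⟩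
    set fext : ℕ → Fin n := fun u => if h : u < t then f ⟨u, h⟩ else Classical.arbitrary (Fin n)
      with hfext
    have hset : {ω | ∀ v : Fin t, X v ω = f v}
        = ⋂ u ∈ Finset.range t, {ω | X u ω = fext u} := by
      ext ω
      simp only [Set.mem_setOf_eq, Set.mem_iInter, Finset.mem_range]
      constructor
      · intro h u hu
        rw [hfext]
        simp only [dif_pos hu]
        exact h ⟨u, hu⟩
      · intro h v
        have := h v.1 v.2
        rw [hfext] at this
        simpa [dif_pos v.2] using this
    rw [hset, hindep.meas_biInter (fun u _ => ⟨{fext u}, trivial, by ext ω; simp⟩)]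
    rw [Finset.prod_congr rfl (fun u _ => hdist u (fext u)), Finset.prod_const,
      Finset.card_range]
  -- the completion events
  set E : ℕ → Set Ω := fun t => {ω | ∀ i : Fin n,
    m ≤ ((Finset.range t).filter (fun u => X u ω = i)).card} with hE
  have hcardtr : ∀ (t : ℕ) (ω : Ω) (i : Fin n),
      ((Finset.range t).filter (fun u => X u ω = i)).card
        = (Finset.univ.filter (fun v : Fin t => X v.1 ω = i)).card := by
    intro t ω i
    refine Finset.card_bij' (fun u hu => (⟨u, Finset.mem_range.1 (Finset.mem_filter.1 hu).1⟩ : Fin t))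
      (fun v _ => v.1) ?_ ?_ ?_ ?_
    · intro u hu
      exact Finset.mem_filter.2 ⟨Finset.mem_univ _, (Finset.mem_filter.1 hu).2⟩
    · intro v hv
      exact Finset.mem_filter.2 ⟨Finset.mem_range.2 v.2, (Finset.mem_filter.1 hv).2⟩
    · intro u hu; rfl
    · intro v hv; rfl
  have hEunion : ∀ t : ℕ, E t = ⋃ f ∈ goodA m n (Fin t), {ω | ∀ v : Fin t, X v ω = f v} := by
    intro t
    ext ω
    simp only [hE, Set.mem_setOf_eq, Set.mem_iUnion]
    constructor
    · intro h
      refine ⟨fun v => X v.1 ω, ?_, fun v => rfl⟩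
      rw [mem_goodA]
      intro i
      rw [← hcardtr t ω i]
      exact h i
    · rintro ⟨f, hf, hfe⟩
      intro i
      rw [hcardtr t ω i]
      have : (fun v : Fin t => X v.1 ω) = f := funext hfe
      rw [Finset.filter_congr (fun v _ => by rw [hfe v])]
      exact mem_goodA.1 hf i
  have hCnm : ∀ (t : ℕ) (f : Fin t → Fin n),
      NullMeasurableSet {ω | ∀ v : Fin t, X v ω = f v} μ := by
    intro t f
    have hset : {ω | ∀ v : Fin t, X v ω = f v} = ⋂ v : Fin t, {ω | X v.1 ω = f v} := by
      ext ω; simp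
    rw [hset]
    exact NullMeasurableSet.iInter (fun v => hAnm v.1 (f v))
  have hEnm : ∀ t : ℕ, NullMeasurableSet (E t) μ := by
    intro t
    rw [hEunion t]
    exact NullMeasurableSet.iUnion (fun f => NullMeasurableSet.iUnion (fun _ => hCnm t f))
  have hEmeasure : ∀ t : ℕ, μ (E t) = ENNReal.ofReal ((gcount m n t : ℝ) / (n:ℝ) ^ t) := by
    intro t
    rw [hEunion t]
    rw [measure_biUnion_finset₀ ?disj (fun f _ => hCnm t f)]
    case disj =>
      intro f hf g hg hfg
      refine Disjoint.aedisjoint (Set.disjoint_left.2 (fun ω h1 h2 => hfg ?_))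
      funext v
      exact (h1 v).symm.trans (h2 v)
    rw [Finset.sum_congr rfl (fun f _ => hC t f), Finset.sum_const, nsmul_eq_mul]
    rw [show #(goodA m n (Fin t)) = gcount m n t from rfl]
    rw [← ENNReal.ofReal_natCast (gcount m n t),
      ← ENNReal.ofReal_pow (by positivity), ← ENNReal.ofReal_mul (by positivity)]
    congr 1
    rw [div_pow, one_pow]
    ring
  -- event relations
  have hEsubT : ∀ t, E t ⊆ {ω | T ω ≤ t} := by
    intro t ω hω
    rw [Set.mem_setOf_eq, hT ω]
    exact Nat.sInf_le hω
  have hmono : ∀ {t1 t2 : ℕ}, t1 ≤ t2 → ∀ {ω}, ω ∈ E t1 → ω ∈ E t2 := by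
    intro t1 t2 h12 ω hω i
    refine le_trans (hω i) (Finset.card_le_card ?_)
    intro u hu
    rcases Finset.mem_filter.1 hu with ⟨h1, h2⟩
    exact Finset.mem_filter.2
      ⟨Finset.mem_range.2 (lt_of_lt_of_le (Finset.mem_range.1 h1) h12), h2⟩
  set Nbad : Set Ω := ⋂ t : ℕ, (E t)ᶜ with hNb
  have hTsub : ∀ t, {ω | T ω ≤ t} ⊆ E t ∪ Nbad := by
    intro t ω hω
    by_cases hex : ∃ t', ω ∈ E t'
    · left
      have hne : {t : ℕ | ∀ i : Fin n,
          m ≤ ((Finset.range t).filter (fun u => X u ω = i)).card}.Nonempty := hex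
      have hmem : ω ∈ E (T ω) := by
        have := Nat.sInf_mem hne
        rw [← hT ω] at this
        exact this
      exact hmono hω hmem
    · right
      push_neg at hex
      exact Set.mem_iInter.2 (fun t' => hex t')
  have hbtail_def : ∀ t, μ ((E t)ᶜ) = ENNReal.ofReal (btail m n t) := by
    intro t
    rw [measure_compl₀ (hEnm t) (measure_ne_top μ _), measure_univ, hEmeasure t,
      show btail m n t = 1 - (gcount m n t : ℝ) / (n:ℝ)^t from rfl,
      ENNReal.ofReal_sub _ (by positivity), ENNReal.ofReal_one]
  have hNbad : μ Nbad = 0 := by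
    have hle : ∀ t, μ Nbad ≤ ENNReal.ofReal (btail m n t) := fun t =>
      (measure_mono (Set.iInter_subset _ t)).trans (hbtail_def t).le
    have htend : Filter.Tendsto (fun t => ENNReal.ofReal (btail m n t)) Filter.atTop (nhds 0) := by
      rw [← ENNReal.ofReal_zero]
      exact (ENNReal.continuous_ofReal.tendsto 0).comp (summable_btail m hn).tendsto_atTop_zero
    exact le_zero_iff.1 (ge_of_tendsto' htend hle)
  have hTae : ∀ t, {ω | T ω ≤ t} =ᵐ[μ] E t := by
    intro t
    rw [MeasureTheory.ae_eq_set]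
    constructor
    · refine measure_mono_null (fun ω hω => ?_) hNbad
      rcases hTsub t hω.1 with h | h
      · exact absurd h hω.2
      · exact h
    · rw [Set.diff_eq_empty.2 (hEsubT t)]
      exact measure_empty
  have hTle_nm : ∀ t, NullMeasurableSet {ω | T ω ≤ t} μ := fun t =>
    (hEnm t).congr (hTae t).symm
  have hTmeasle : ∀ t, μ {ω | T ω ≤ t} = ENNReal.ofReal ((gcount m n t : ℝ)/(n:ℝ)^t) := fun t =>
    (measure_congr (hTae t)).trans (hEmeasure t)
  have hTeq_nm : ∀ t, NullMeasurableSet {ω | T ω = t} μ := by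
    intro t
    cases t with
    | zero =>
      have h : {ω | T ω = 0} = {ω | T ω ≤ 0} := by ext ω; simp [Nat.le_zero]
      rw [h]; exact hTle_nm 0
    | succ k =>
      have h : {ω | T ω = k+1} = {ω | T ω ≤ k+1} \ {ω | T ω ≤ k} := by
        ext ω
        simp only [Set.mem_setOf_eq, Set.mem_diff]
        omega
      rw [h]; exact (hTle_nm (k+1)).diff (hTle_nm k)
  have hTnull : NullMeasurable T μ := by
    intro s hs
    have h : T ⁻¹' s = ⋃ t ∈ s, {ω | T ω = t} := by
      ext ω; simp
    rw [h]
    exact NullMeasurableSet.biUnion (Set.to_countable s) (fun t _ => hTeq_nm t)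
  have hTaem : AEMeasurable T μ := hTnull.aemeasurable
  have hint : ∫ ω, (T ω : ℝ) ∂μ = (∫⁻ ω, (T ω : ENNReal) ∂μ).toReal := by
    have h0 : (0 : Ω → ℝ) ≤ᶠ[MeasureTheory.ae μ] (fun ω => (T ω : ℝ)) :=
      Filter.Eventually.of_forall (fun ω => by positivity)
    rw [integral_eq_lintegral_of_nonneg_ae h0
      ((measurable_from_nat.comp_aemeasurable hTaem).aestronglyMeasurable)]
    congr 1
    refine lintegral_congr (fun ω => ?_)
    rw [ENNReal.ofReal_natCast]
  set T' := hTaem.mk T with hT'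
  have hT'm : Measurable T' := hTaem.measurable_mk
  have hT'ae : T =ᵐ[μ] T' := hTaem.ae_eq_mk
  have hlin2 : ∫⁻ ω, (T ω : ENNReal) ∂μ = ∫⁻ ω, (T' ω : ENNReal) ∂μ :=
    lintegral_congr_ae (hT'ae.mono (fun ω h => by simp only [h]))
  rw [hint, hlin2, lintegral_nat_tail μ T' hT'm]
  have htail : ∀ t, μ {ω | t < T' ω} = ENNReal.ofReal (btail m n t) := by
    intro t
    have h1 : {ω | t < T' ω} =ᵐ[μ] {ω | t < T ω} := by
      filter_upwards [hT'ae] with ω h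
      change (t < T' ω) = (t < T ω)
      rw [h]
    rw [measure_congr h1]
    have h2 : {ω | t < T ω} = {ω | T ω ≤ t}ᶜ := by
      ext ω
      simp [not_le]
    rw [h2, measure_compl₀ (hTle_nm t) (measure_ne_top μ _), measure_univ, hTmeasle t,
      show btail m n t = 1 - (gcount m n t : ℝ) / (n:ℝ)^t from rfl,
      ENNReal.ofReal_sub _ (by positivity), ENNReal.ofReal_one]
  rw [tsum_congr htail,
    ← ENNReal.ofReal_tsum_of_nonneg (fun t => btail_nonneg hn) (summable_btail m hn),
    ENNReal.toReal_ofReal (tsum_nonneg (fun t => btail_nonneg hn))]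

/-- uniform coupon collector's brotherhood:
`E[T_n(m)] = n ∫_0^∞ [ 1 - (1 - S_m(x) e^{-x})^n ] dx`. -/
theorem stmt8
    (n : ℕ) (hn : 1 ≤ n) (m : ℕ) (hm : 1 ≤ m)
    (Ω : Type*) [MeasurableSpace Ω] (μ : Measure Ω) [IsProbabilityMeasure μ]
    (X : ℕ → Ω → Fin n)
    (hindep : iIndepFun (m := fun _ => (⊤ : MeasurableSpace (Fin n))) X μ)
    (hdist : ∀ t i, μ {ω | X t ω = i} = ENNReal.ofReal (1 / (n : ℝ)))
    (T : Ω → ℕ)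
    (hT : ∀ ω, T ω = sInf {t : ℕ | ∀ i : Fin n,
      m ≤ ((Finset.range t).filter (fun u => X u ω = i)).card}) :
    ∫ ω, (T ω : ℝ) ∂μ
      = n * ∫ x in Set.Ioi (0 : ℝ), (1 - (1 - truncExp m x * Real.exp (-x)) ^ n) := by
  rw [lhs_eq n hn m hm Ω μ X hindep hdist T hT, ← rhs_eq m hn]
end

section
/- In the random annex code, the expected number of information packets in a fixed extended generation G_i (of size g = h + l) that participate in no other generation equals h(1-π)^{n-1} with π = l/((n-1)h); and the expected number of packets of G_i participating in at least two generations equals l + h[1 - (1-π)^{n-1}]. -/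
open MeasureTheory ProbabilityTheory Finset

/-- in the random annex code, the expected number of packets of a
fixed extended generation `G i = B i ∪ R i` that participate in no other
generation equals `h(1-π)^{n-1}`, and the expected number of its packets
participating in at least two generations equals `l + h[1 - (1-π)^{n-1}]`,
where `π = l/((n-1)h)`. -/
theorem stmt14
    (n h l N : ℕ) (hn : 2 ≤ n) (hh : 1 ≤ h) (hN : N = n * h) (hl : l ≤ N - h)
    (B : Fin n → Finset (Fin N)) (hBcard : ∀ i, (B i).card = h)
    (hBdisj : ∀ i j, i ≠ j → Disjoint (B i) (B j))
    (hBcover : ∀ p : Fin N, ∃ i, p ∈ B i)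
    (μ : @Measure (Fin n → Finset (Fin N)) ⊤) (hprob : IsProbabilityMeasure μ)
    (hindep : iIndepFun (m := fun _ : Fin n => (⊤ : MeasurableSpace (Finset (Fin N))))
      (fun i (R : Fin n → Finset (Fin N)) => R i) μ)
    (hunif : ∀ (i : Fin n) (S : Finset (Fin N)),
      μ {R | R i = S}
        = if S.card = l ∧ Disjoint S (B i)
            then (Nat.choose (N - h) l : ENNReal)⁻¹ else 0)
    (hl0 : 0 < l)
    (i : Fin n)
    (π : ℝ) (hπ : π = (l : ℝ) / (((n : ℝ) - 1) * h)) :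
    (∫ R, (((B i ∪ R i).filter
        (fun p => ∀ j : Fin n, j ≠ i → p ∉ B j ∪ R j)).card : ℝ) ∂μ)
      = h * (1 - π) ^ (n - 1) ∧
    (∫ R, (((B i ∪ R i).filter
        (fun p => ∃ j : Fin n, j ≠ i ∧ p ∈ B j ∪ R j)).card : ℝ) ∂μ)
      = l + h * (1 - (1 - π) ^ (n - 1)) := by
  classical
  letI : MeasurableSpace (Fin n → Finset (Fin N)) := ⊤
  haveI : MeasurableSingletonClass (Fin n → Finset (Fin N)) := ⟨fun _ => trivial⟩
  set m := N - h with hm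
  have hmval : m = (n - 1) * h := by
    subst hN
    rw [hm, Nat.mul_comm, ← Nat.mul_pred, Nat.mul_comm, Nat.pred_eq_sub_one]
  have hm1 : 1 ≤ m := by
    rw [hmval]; exact Nat.one_le_iff_ne_zero.2 (Nat.mul_ne_zero (by omega) (by omega))
  have hcpos : 0 < Nat.choose m l := Nat.choose_pos hl
  -- the bad set is null
  have hbad : μ {R : Fin n → Finset (Fin N) |
      ¬((R i).card = l ∧ Disjoint (R i) (B i))} = 0 := by
    have hnull : ∀ S : Finset (Fin N),
        μ {R : Fin n → Finset (Fin N) |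
          R i = S ∧ ¬(S.card = l ∧ Disjoint S (B i))} = 0 := by
      intro S
      by_cases hPS : S.card = l ∧ Disjoint S (B i)
      · have hemp : {R : Fin n → Finset (Fin N) |
            R i = S ∧ ¬(S.card = l ∧ Disjoint S (B i))} = (∅ : Set _) := by
          ext R; simp [hPS]
        rw [hemp]; exact measure_empty
      · refine measure_mono_null (fun R hR => hR.1) ?_
        show μ {R : Fin n → Finset (Fin N) | R i = S} = 0
        rw [hunif i S, if_neg hPS]
    refine measure_mono_null (fun R hR => ?_) (measure_iUnion_null hnull)
    exact Set.mem_iUnion.2 ⟨R i, rfl, hR⟩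
  have hgood : ∀ᵐ R ∂μ, (R i).card = l ∧ Disjoint (R i) (B i) := by
    rw [ae_iff]; exact hbad
  -- single-coordinate probability
  have hsingle : ∀ (j : Fin n) (p : Fin N), p ∉ B j →
      μ {R : Fin n → Finset (Fin N) | p ∉ R j}
        = (Nat.choose (m - 1) l : ENNReal) * (Nat.choose m l : ENNReal)⁻¹ := by
    intro j p hp
    have hset : {R : Fin n → Finset (Fin N) | p ∉ R j}
        = ⋃ S ∈ (univ.filter (fun S : Finset (Fin N) => p ∉ S)),
          {R : Fin n → Finset (Fin N) | R j = S} := by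
      ext R
      simp only [Set.mem_setOf_eq, Set.mem_iUnion, mem_filter, mem_univ, true_and]
      exact ⟨fun hR => ⟨R j, hR, rfl⟩, fun ⟨S, hS, hRS⟩ => hRS ▸ hS⟩
    rw [hset, measure_biUnion_finset ?_ (fun _ _ => MeasurableSpace.measurableSet_top)]
    · have hkey : ∀ S ∈ (univ.filter (fun S : Finset (Fin N) => p ∉ S)),
          μ {R : Fin n → Finset (Fin N) | R j = S}
            = if S ∈ Finset.powersetCard l (((B j)ᶜ).erase p)
                then (Nat.choose m l : ENNReal)⁻¹ else 0 := by
        intro S hS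
        simp only [mem_filter, mem_univ, true_and] at hS
        rw [hunif j S]
        congr 1
        simp only [Finset.mem_powersetCard, Finset.subset_erase, eq_iff_iff]
        constructor
        · rintro ⟨h1, h2⟩
          refine ⟨⟨fun x hx => Finset.mem_compl.2 (fun hxB =>
            (Finset.disjoint_left.1 h2) hx hxB), hS⟩, h1⟩
        · rintro ⟨⟨h1, _⟩, h2⟩
          exact ⟨h2, Finset.disjoint_left.2 (fun x hx hxB =>
            Finset.mem_compl.1 (h1 hx) hxB)⟩
      rw [Finset.sum_congr rfl hkey, Finset.sum_ite_mem, Finset.sum_const]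
      have hsubset : Finset.powersetCard l (((B j)ᶜ).erase p)
          ⊆ univ.filter (fun S : Finset (Fin N) => p ∉ S) := by
        intro S hS
        simp only [Finset.mem_powersetCard, Finset.subset_erase] at hS
        simp only [mem_filter, mem_univ, true_and]
        exact hS.1.2
      rw [Finset.inter_eq_right.2 hsubset, Finset.card_powersetCard,
        Finset.card_erase_of_mem (Finset.mem_compl.2 hp), Finset.card_compl,
        hBcard j]
      have hcardN : Fintype.card (Fin N) - h = m := by simp [hm]
      rw [hcardN]
      simp [nsmul_eq_mul]
    · intro S hS T hT hST
      simp only [Function.onFun, Set.disjoint_left, Set.mem_setOf_eq]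
      intro R hRS hRT
      exact hST (hRS ▸ hRT ▸ rfl)
  -- the product event
  have hAmeas : ∀ p : Fin N, p ∈ B i →
      μ {R : Fin n → Finset (Fin N) | ∀ j : Fin n, j ≠ i → p ∉ R j}
        = ((Nat.choose (m - 1) l : ENNReal) * (Nat.choose m l : ENNReal)⁻¹) ^ (n - 1) := by
    intro p hp
    have hset : {R : Fin n → Finset (Fin N) | ∀ j : Fin n, j ≠ i → p ∉ R j}
        = ⋂ j ∈ univ.erase i, (fun R : Fin n → Finset (Fin N) => R j) ⁻¹'
            {S : Finset (Fin N) | p ∉ S} := by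
      ext R
      simp only [Set.mem_setOf_eq, Set.mem_iInter, Set.mem_preimage, mem_erase,
        mem_univ, and_true]
    rw [hset, hindep.measure_inter_preimage_eq_mul (univ.erase i)
      (sets := fun _ => {S : Finset (Fin N) | p ∉ S}) (fun _ _ => MeasurableSpace.measurableSet_top)]
    have hfac : ∀ j ∈ univ.erase i,
        μ ((fun R : Fin n → Finset (Fin N) => R j) ⁻¹' {S : Finset (Fin N) | p ∉ S})
          = (Nat.choose (m - 1) l : ENNReal) * (Nat.choose m l : ENNReal)⁻¹ := by
      intro j hj
      have hji : j ≠ i := (mem_erase.1 hj).1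
      have hpj : p ∉ B j := fun hpj =>
        (Finset.disjoint_left.1 (hBdisj j i hji)) hpj hp
      exact hsingle j p hpj
    rw [Finset.prod_congr rfl hfac, Finset.prod_const, Finset.card_erase_of_mem
      (mem_univ i), Finset.card_univ, Fintype.card_fin]
  -- real value of the single probability
  have hchoose_ne : (Nat.choose m l : ℝ) ≠ 0 := Nat.cast_ne_zero.2 hcpos.ne'
  have hm0 : (0:ℝ) < (m : ℝ) := by exact_mod_cast hm1
  have hqreal : ((Nat.choose (m - 1) l : ℝ)) / (Nat.choose m l : ℝ) = 1 - π := by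
    have hid : Nat.choose (m - 1) l * m = Nat.choose m l * (m - l) := by
      have h1 := Nat.choose_mul_succ_eq (m - 1) l
      have h2 : m - 1 + 1 = m := by omega
      rw [h2] at h1
      exact h1
    have hcast : (Nat.choose (m - 1) l : ℝ) * m = (Nat.choose m l : ℝ) * ((m : ℝ) - l) := by
      have h3 : ((Nat.choose (m - 1) l * m : ℕ) : ℝ)
          = ((Nat.choose m l * (m - l) : ℕ) : ℝ) := by rw [hid]
      push_cast [Nat.cast_sub hl] at h3
      linarith [h3]
    have hmreal : (m : ℝ) = ((n : ℝ) - 1) * h := by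
      rw [hmval]
      push_cast [Nat.cast_sub (show 1 ≤ n by omega)]
      ring
    have hstep : (Nat.choose (m - 1) l : ℝ) / (Nat.choose m l : ℝ)
        = ((m : ℝ) - l) / m := by
      rw [div_eq_div_iff hchoose_ne hm0.ne']
      linarith [hcast]
    have hpi : 1 - π = ((m : ℝ) - l) / m := by
      rw [hπ, ← hmreal]
      field_simp
    rw [hstep, hpi]
  have hq_toReal : ((Nat.choose (m - 1) l : ENNReal) * (Nat.choose m l : ENNReal)⁻¹).toReal
      = 1 - π := by
    rw [ENNReal.toReal_mul, ENNReal.toReal_inv]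
    simp only [ENNReal.toReal_natCast]
    rw [← hqreal]; ring
  -- the first integral
  have hInt1 : (∫ R, (((B i ∪ R i).filter
        (fun p => ∀ j : Fin n, j ≠ i → p ∉ B j ∪ R j)).card : ℝ) ∂μ)
      = h * (1 - π) ^ (n - 1) := by
    have hae : (fun R : Fin n → Finset (Fin N) => (((B i ∪ R i).filter
          (fun p => ∀ j : Fin n, j ≠ i → p ∉ B j ∪ R j)).card : ℝ))
        =ᵐ[μ] (fun R => ∑ p ∈ B i,
          if ∀ j : Fin n, j ≠ i → p ∉ R j then (1:ℝ) else 0) := by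
      filter_upwards [hgood] with R hR
      have hfilter : (B i ∪ R i).filter
            (fun p => ∀ j : Fin n, j ≠ i → p ∉ B j ∪ R j)
          = (B i).filter (fun p => ∀ j : Fin n, j ≠ i → p ∉ R j) := by
        ext p
        simp only [mem_filter, Finset.mem_union]
        constructor
        · rintro ⟨hp, hc⟩
          rcases hp with hp | hp
          · exact ⟨hp, fun j hj hpR => hc j hj (Or.inr hpR)⟩
          · exfalso
            have hpBi : p ∉ B i := Finset.disjoint_left.1 hR.2 hp
            obtain ⟨r, hr⟩ := hBcover p
            have hri : r ≠ i := fun hri => hpBi (hri ▸ hr)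
            exact hc r hri (Or.inl hr)
        · rintro ⟨hp, hc⟩
          refine ⟨Or.inl hp, fun j hj hmem => ?_⟩
          rcases hmem with hmem | hmem
          · exact (Finset.disjoint_left.1 (hBdisj i j (Ne.symm hj))) hp hmem
          · exact hc j hj hmem
      rw [hfilter, Finset.card_filter]
      push_cast
      rfl
    rw [integral_congr_ae hae, integral_finset_sum _
      (fun p _ => Integrable.of_finite)]
    have hterm : ∀ p ∈ B i,
        (∫ R, (if ∀ j : Fin n, j ≠ i → p ∉ R j then (1:ℝ) else 0) ∂μ)
          = (1 - π) ^ (n - 1) := by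
      intro p hp
      have : (fun R : Fin n → Finset (Fin N) =>
            if ∀ j : Fin n, j ≠ i → p ∉ R j then (1:ℝ) else 0)
          = Set.indicator {R : Fin n → Finset (Fin N) | ∀ j : Fin n, j ≠ i → p ∉ R j}
              (fun _ => (1:ℝ)) := by
        ext R
        simp [Set.indicator_apply, Set.mem_setOf_eq]
      rw [this, integral_indicator_const _ MeasurableSpace.measurableSet_top, measureReal_def, hAmeas p hp, smul_eq_mul, mul_one,
        ENNReal.toReal_pow, hq_toReal]
    rw [Finset.sum_congr rfl hterm, Finset.sum_const, hBcard i, nsmul_eq_mul]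
  refine ⟨hInt1, ?_⟩
  -- second integral
  have hae2 : (fun R : Fin n → Finset (Fin N) => (((B i ∪ R i).filter
        (fun p => ∃ j : Fin n, j ≠ i ∧ p ∈ B j ∪ R j)).card : ℝ))
      =ᵐ[μ] (fun R => ((h : ℝ) + l) - (((B i ∪ R i).filter
        (fun p => ∀ j : Fin n, j ≠ i → p ∉ B j ∪ R j)).card : ℝ)) := by
    filter_upwards [hgood] with R hR
    have hcardG : (B i ∪ R i).card = h + l := by
      rw [Finset.card_union_of_disjoint hR.2.symm, hBcard i, hR.1]
    have hnot : (B i ∪ R i).filter (fun p => ∃ j : Fin n, j ≠ i ∧ p ∈ B j ∪ R j)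
        = (B i ∪ R i).filter (fun p =>
            ¬ (∀ j : Fin n, j ≠ i → p ∉ B j ∪ R j)) := by
      apply Finset.filter_congr
      intro p _
      push_neg
      simp
    rw [hnot, Finset.filter_not, Finset.card_sdiff_of_subset (Finset.filter_subset _ _)]
    rw [Nat.cast_sub (Finset.card_filter_le _ _), hcardG]
    push_cast
    ring
  rw [integral_congr_ae hae2, integral_sub (Integrable.of_finite) (Integrable.of_finite),
    integral_const, measureReal_def, measure_univ, ENNReal.toReal_one, one_smul, hInt1]
  ring
end

section
/- In the random annex code, the probability that two distinct extended generations G_i and G_j overlap (share at least one packet) equals 1 - multinomial(N-2h; l, l, N-2h-2l)/C(N-h, l)², where multinomial(N-2h; l, l, N-2h-2l) = (N-2h)!/(l! l! (N-2h-2l)!). -/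
open MeasureTheory ProbabilityTheory Finset

/-- in the random annex code, two distinct extended generations
`G i` and `G j` overlap with probability
`1 - multinomial(N-2h; l, l, N-2h-2l)/C(N-h, l)²`. -/
theorem stmt15
    (n h l N : ℕ) (hn : 2 ≤ n) (hh : 1 ≤ h) (hN : N = n * h) (hl : l ≤ N - h)
    (B : Fin n → Finset (Fin N)) (hBcard : ∀ i, (B i).card = h)
    (hBdisj : ∀ i j, i ≠ j → Disjoint (B i) (B j))
    (hBcover : ∀ p : Fin N, ∃ i, p ∈ B i)
    (μ : @Measure (Fin n → Finset (Fin N)) ⊤) (hprob : IsProbabilityMeasure μ)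
    (hindep : iIndepFun (m := fun _ : Fin n => (⊤ : MeasurableSpace (Finset (Fin N))))
      (fun i (R : Fin n → Finset (Fin N)) => R i) μ)
    (hunif : ∀ (i : Fin n) (S : Finset (Fin N)),
      μ {R | R i = S}
        = if S.card = l ∧ Disjoint S (B i)
            then (Nat.choose (N - h) l : ENNReal)⁻¹ else 0)
    (hll : 2 * l ≤ N - 2 * h)
    (i j : Fin n) (hij : i ≠ j) :
    μ {R | ¬ Disjoint (B i ∪ R i) (B j ∪ R j)}
      = ENNReal.ofReal (1 -
          (((N - 2 * h).factorial : ℝ)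
              / ((l.factorial : ℝ) * (l.factorial : ℝ) * ((N - 2 * h - 2 * l).factorial : ℝ)))
            / ((Nat.choose (N - h) l : ℝ)) ^ 2) := by
  classical
  have hBij : Disjoint (B i) (B j) := hBdisj i j hij
  set C : ℕ := Nat.choose (N - h) l with hCdef
  have hCpos : 0 < C := Nat.choose_pos hl
  set c : ENNReal := (C : ENNReal)⁻¹ with hcdef
  set m : ℕ := N - 2 * h with hmdef
  -- the ambient set minus the two base generations
  set A : Finset (Fin N) := Finset.univ \ (B i ∪ B j) with hAdef
  have hcardBij : (B i ∪ B j).card = 2 * h := by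
    rw [Finset.card_union_of_disjoint hBij, hBcard, hBcard]; ring
  have hAcard : A.card = m := by
    rw [hAdef, Finset.card_sdiff_of_subset (Finset.subset_univ _), Finset.card_univ, Fintype.card_fin,
      hcardBij]
  -- the disjointness event and its complement
  set D : Set (Fin n → Finset (Fin N)) := {R | Disjoint (B i ∪ R i) (B j ∪ R j)} with hDdef
  have hcompl : μ {R | ¬ Disjoint (B i ∪ R i) (B j ∪ R j)} = 1 - μ D := by
    have h1 : {R : Fin n → Finset (Fin N) | ¬ Disjoint (B i ∪ R i) (B j ∪ R j)} = Dᶜ := rfl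
    rw [h1, measure_compl (MeasurableSpace.measurableSet_top) (measure_ne_top μ _),
      measure_univ]
  -- decompose D as a union of fibers
  set E : Finset (Finset (Fin N) × Finset (Fin N)) :=
    Finset.univ.filter (fun p => Disjoint (B i ∪ p.1) (B j ∪ p.2)) with hEdef
  have hDeq : D = ⋃ p ∈ E, ((fun R : Fin n → Finset (Fin N) => R i) ⁻¹' {p.1}
      ∩ (fun R : Fin n → Finset (Fin N) => R j) ⁻¹' {p.2}) := by
    ext R
    simp only [hDdef, hEdef, Set.mem_setOf_eq, Set.mem_iUnion, Finset.mem_filter,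
      Finset.mem_univ, true_and, Set.mem_inter_iff, Set.mem_preimage, Set.mem_singleton_iff]
    constructor
    · intro hR
      exact ⟨(R i, R j), hR, rfl, rfl⟩
    · rintro ⟨p, hp, h1, h2⟩
      rw [h1, h2]; exact hp
  have hind := hindep.indepFun hij
  have hfib : ∀ p : Finset (Fin N) × Finset (Fin N),
      μ ((fun R : Fin n → Finset (Fin N) => R i) ⁻¹' {p.1}
        ∩ (fun R : Fin n → Finset (Fin N) => R j) ⁻¹' {p.2})
      = (if p.1.card = l ∧ Disjoint p.1 (B i) then c else 0)
        * (if p.2.card = l ∧ Disjoint p.2 (B j) then c else 0) := by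
    intro p
    rw [hind.measure_inter_preimage_eq_mul _ _ (MeasurableSpace.measurableSet_top)
      (MeasurableSpace.measurableSet_top)]
    have e1 : (fun R : Fin n → Finset (Fin N) => R i) ⁻¹' {p.1} = {R | R i = p.1} := by
      ext R; simp
    have e2 : (fun R : Fin n → Finset (Fin N) => R j) ⁻¹' {p.2} = {R | R j = p.2} := by
      ext R; simp
    rw [e1, e2, hunif i p.1, hunif j p.2]
  have hDmeas : μ D = ∑ p ∈ E,
      (if p.1.card = l ∧ Disjoint p.1 (B i) then c else 0)
        * (if p.2.card = l ∧ Disjoint p.2 (B j) then c else 0) := by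
    rw [hDeq, measure_biUnion_finset]
    · exact Finset.sum_congr rfl (fun p _ => hfib p)
    · intro p _ q _ hpq
      simp only [Function.onFun]
      rw [Set.disjoint_left]
      rintro R ⟨h1, h2⟩ ⟨h3, h4⟩
      simp only [Set.mem_preimage, Set.mem_singleton_iff] at h1 h2 h3 h4
      exact hpq (Prod.ext (h1.symm.trans h3) (h2.symm.trans h4))
    · intro p _
      exact MeasurableSpace.measurableSet_top
  -- rewrite as a double sum over all pairs
  have hsum1 : μ D = ∑ S : Finset (Fin N), ∑ T : Finset (Fin N),
      (if Disjoint (B i ∪ S) (B j ∪ T) then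
        (if S.card = l ∧ Disjoint S (B i) then c else 0)
          * (if T.card = l ∧ Disjoint T (B j) then c else 0) else 0) := by
    rw [hDmeas, hEdef, Finset.sum_filter]
    exact Fintype.sum_prod_type _
  -- identify each summand with membership in the powerset-card sets
  have key : ∀ S T : Finset (Fin N),
      (if Disjoint (B i ∪ S) (B j ∪ T) then
        (if S.card = l ∧ Disjoint S (B i) then c else 0)
          * (if T.card = l ∧ Disjoint T (B j) then c else 0) else 0)
      = (if S ∈ A.powersetCard l then
          (if T ∈ (A \ S).powersetCard l then c * c else 0) else 0) := by
    intro S T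
    have hSmem : S ∈ A.powersetCard l ↔
        (Disjoint S (B i) ∧ Disjoint S (B j)) ∧ S.card = l := by
      rw [Finset.mem_powersetCard, hAdef, Finset.subset_sdiff,
        Finset.disjoint_union_right]
      simp [Finset.subset_univ]
    have hTmem : T ∈ (A \ S).powersetCard l ↔
        ((Disjoint T (B i) ∧ Disjoint T (B j)) ∧ Disjoint T S) ∧ T.card = l := by
      rw [Finset.mem_powersetCard, Finset.subset_sdiff, hAdef, Finset.subset_sdiff,
        Finset.disjoint_union_right]
      simp [Finset.subset_univ]
    have hev : Disjoint (B i ∪ S) (B j ∪ T) ↔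
        (Disjoint (B i) (B j) ∧ Disjoint (B i) T) ∧ (Disjoint S (B j) ∧ Disjoint S T) := by
      rw [Finset.disjoint_union_left, Finset.disjoint_union_right,
        Finset.disjoint_union_right]
    by_cases h1 : Disjoint (B i ∪ S) (B j ∪ T)
    · rw [if_pos h1]
      obtain ⟨⟨_, hBiT⟩, hSBj, hST⟩ := hev.mp h1
      by_cases h2 : S.card = l ∧ Disjoint S (B i)
      · by_cases h3 : T.card = l ∧ Disjoint T (B j)
        · rw [if_pos h2, if_pos h3, if_pos (hSmem.mpr ⟨⟨h2.2, hSBj⟩, h2.1⟩),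
            if_pos (hTmem.mpr ⟨⟨⟨hBiT.symm, h3.2⟩, hST.symm⟩, h3.1⟩)]
        · rw [if_neg h3, mul_zero]
          by_cases h4 : S ∈ A.powersetCard l
          · rw [if_pos h4, if_neg, ]
            intro hT
            obtain ⟨⟨⟨_, hTBj⟩, _⟩, hTl⟩ := hTmem.mp hT
            exact h3 ⟨hTl, hTBj⟩
          · rw [if_neg h4]
      · rw [if_neg h2, zero_mul, if_neg]
        intro hS
        obtain ⟨⟨hSBi, _⟩, hSl⟩ := hSmem.mp hS
        exact h2 ⟨hSl, hSBi⟩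
    · rw [if_neg h1]
      by_cases h4 : S ∈ A.powersetCard l
      · rw [if_pos h4, eq_comm, if_neg]
        intro hT
        obtain ⟨⟨⟨hTBi, hTBj⟩, hTS⟩, _⟩ := hTmem.mp hT
        obtain ⟨⟨hSBi, hSBj⟩, _⟩ := hSmem.mp h4
        exact h1 (hev.mpr ⟨⟨hBij, hTBi.symm⟩, hSBj, hTS.symm⟩)
      · rw [if_neg h4]
  -- compute the double sum
  have hsum2 : μ D = (Nat.choose m l : ENNReal) * (Nat.choose (m - l) l : ENNReal) * (c * c) := by
    rw [hsum1]
    have : ∀ S : Finset (Fin N), ∑ T : Finset (Fin N),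
        (if Disjoint (B i ∪ S) (B j ∪ T) then
          (if S.card = l ∧ Disjoint S (B i) then c else 0)
            * (if T.card = l ∧ Disjoint T (B j) then c else 0) else 0)
        = if S ∈ A.powersetCard l then (Nat.choose (m - l) l : ENNReal) * (c * c) else 0 := by
      intro S
      rw [Finset.sum_congr rfl (fun T _ => key S T)]
      by_cases h4 : S ∈ A.powersetCard l
      · simp only [if_pos h4, Finset.sum_ite_mem, Finset.univ_inter, Finset.sum_const,
          nsmul_eq_mul, Finset.card_powersetCard]
        congr 2
        rw [Finset.card_sdiff_of_subset (Finset.mem_powersetCard.mp h4).1, hAcard,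
          (Finset.mem_powersetCard.mp h4).2]
      · rw [if_neg h4, Finset.sum_eq_zero (fun T _ => if_neg h4)]
    rw [Finset.sum_congr rfl (fun S _ => this S)]
    simp only [Finset.sum_ite_mem, Finset.univ_inter, Finset.sum_const, nsmul_eq_mul,
      Finset.card_powersetCard, hAcard]
    ring
  -- the factorial identity
  have hlm : l ≤ m := le_trans (by omega) hll
  have hlml : l ≤ m - l := by omega
  have hfact : (Nat.choose m l) * (Nat.choose (m - l) l)
      * (l.factorial * l.factorial * (m - 2 * l).factorial) = m.factorial := by
    have h2 : Nat.choose (m - l) l * l.factorial * (m - 2 * l).factorial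
        = (m - l).factorial := by
      have := Nat.choose_mul_factorial_mul_factorial hlml
      rwa [show m - l - l = m - 2 * l by omega] at this
    have h1 := Nat.choose_mul_factorial_mul_factorial hlm
    calc (Nat.choose m l) * (Nat.choose (m - l) l)
        * (l.factorial * l.factorial * (m - 2 * l).factorial)
        = Nat.choose m l * l.factorial
          * (Nat.choose (m - l) l * l.factorial * (m - 2 * l).factorial) := by ring
      _ = Nat.choose m l * l.factorial * (m - l).factorial := by rw [h2]
      _ = m.factorial := h1
  -- convert the real expression
  have hC0 : (C : ℝ) ≠ 0 := Nat.cast_ne_zero.mpr hCpos.ne'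
  have hfac0 : (l.factorial : ℝ) * (l.factorial : ℝ) * ((m - 2 * l).factorial : ℝ) ≠ 0 := by
    positivity
  have hreal : ((m.factorial : ℝ)
        / ((l.factorial : ℝ) * (l.factorial : ℝ) * ((m - 2 * l).factorial : ℝ)))
      / ((C : ℝ)) ^ 2
      = ((Nat.choose m l * Nat.choose (m - l) l : ℕ) : ℝ) / (C : ℝ) ^ 2 := by
    rw [← hfact]
    push_cast
    field_simp
  rw [hcompl, hsum2]
  rw [show ((N - 2 * h).factorial : ℝ) = (m.factorial : ℝ) by rw [hmdef],
    show ((N - 2 * h - 2 * l).factorial : ℝ) = ((m - 2 * l).factorial : ℝ) by rw [hmdef]]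
  rw [hreal]
  -- final ENNReal arithmetic
  have hofReal : ENNReal.ofReal (((Nat.choose m l * Nat.choose (m - l) l : ℕ) : ℝ) / (C : ℝ) ^ 2)
      = (Nat.choose m l : ENNReal) * (Nat.choose (m - l) l : ENNReal) * (c * c) := by
    rw [ENNReal.ofReal_div_of_pos (by positivity), ENNReal.ofReal_natCast,
      ENNReal.ofReal_pow (by positivity), ENNReal.ofReal_natCast]
    rw [hcdef, div_eq_mul_inv, pow_two,
      ENNReal.mul_inv (Or.inl (by exact_mod_cast hCpos.ne')) (Or.inl (ENNReal.natCast_ne_top C))]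
    push_cast
    ring
  rw [ENNReal.ofReal_sub _ (by positivity), ENNReal.ofReal_one, hofReal]
end
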